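/- arXiv:2501.03922 — 9 statements merged into one kernel-verified Lean document; each statement's English description precedes it below -/
import Mathlib

section
/- Let f : F_2^n → F_2^m be an APN function, l < m a positive integer, and π : F_2^m → F_2^l an F_2-linear surjection. Then π ∘ f is APN if and only if D_f*(F_2^n) ∩ ker(π) = ∅, where D_f*(F_2^n) = { B_f(x,t) + B_f(y,t) : x,y,t ∈ F_2^n, x ≠ y, t ≠ 0, x ≠ y + t } and B_f(x,t) = f(x+t) + f(x) + f(t) + f(0). -/
/-- `f` is almost perfect nonlinear: for every nonzero `a` and every `b`,
the equation `f (x + a) + f x = b` has at most 2 solutions. -/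
def IsAPN {V W : Type*} [AddCommGroup V] [AddCommGroup W] (f : V → W) : Prop :=
  ∀ a : V, a ≠ 0 → ∀ b : W, {x : V | f (x + a) + f x = b}.ncard ≤ 2

/-- `B_f(x,t) = f(x+t) + f(x) + f(t) + f(0)`. -/
def Bf {V W : Type*} [AddCommGroup V] [AddCommGroup W] (f : V → W) (x t : V) : W :=
  f (x + t) + f x + f t + f 0

/-- `D_f^*(F_2^n)`. -/
def DfStar {V W : Type*} [AddCommGroup V] [AddCommGroup W] (f : V → W) : Set W :=
  {d | ∃ x y t : V, x ≠ y ∧ t ≠ 0 ∧ x ≠ y + t ∧ d = Bf f x t + Bf f y t}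

private lemma addself {k : ℕ} (v : Fin k → ZMod 2) : v + v = 0 := by
  funext i
  simp only [Pi.add_apply, Pi.zero_apply]
  exact CharTwo.add_self_eq_zero _

private lemma add_eq_zero_iff_eq {k : ℕ} {a b : Fin k → ZMod 2} : a + b = 0 ↔ a = b := by
  constructor
  · intro h
    have h2 := congrArg (· + b) h
    simpa [add_assoc, addself] using h2
  · rintro rfl; exact addself a

private lemma Bf_add {n m : ℕ} (f : (Fin n → ZMod 2) → (Fin m → ZMod 2)) (x y t : Fin n → ZMod 2) :
    Bf f x t + Bf f y t = (f (x + t) + f x) + (f (y + t) + f y) := by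
  unfold Bf
  have h1 := addself (f t)
  have h2 := addself (f 0)
  abel_nf
  simp [two_mul, two_nsmul, h1, h2]

theorem stmt0 (n m l : ℕ) (hl : 0 < l) (hlm : l < m)
    (f : (Fin n → ZMod 2) → (Fin m → ZMod 2))
    (hf : IsAPN f)
    (π : (Fin m → ZMod 2) →ₗ[ZMod 2] (Fin l → ZMod 2))
    (hπ : Function.Surjective π) :
    IsAPN (fun x => π (f x)) ↔ DfStar f ∩ (LinearMap.ker π : Set (Fin m → ZMod 2)) = ∅ := by
  constructor
  · intro hAPN
    rw [Set.eq_empty_iff_forall_notMem]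
    rintro d ⟨⟨x, y, t, hxy, ht, hxyt, hd⟩, hker⟩
    have hker' : π d = 0 := hker
    have key := hAPN t ht (π (f (x + t) + f x))
    -- three distinct elements x, x+t, y in the solution set
    set S : Set (Fin n → ZMod 2) :=
      {z | (fun x => π (f x)) (z + t) + (fun x => π (f x)) z = π (f (x + t) + f x)} with hS
    have hx : x ∈ S := by simp [hS, ← map_add]
    have hxt : x + t ∈ S := by
      have hxtt : x + t + t = x := by rw [add_assoc, addself, add_zero]
      simp only [hS, Set.mem_setOf_eq, hxtt, ← map_add]
      rw [add_comm (f x) (f (x + t))]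
    have hy : y ∈ S := by
      have h0 : π ((f (x + t) + f x) + (f (y + t) + f y)) = 0 := by
        rw [← Bf_add]; rw [hd] at hker'; exact hker'
      have h1 : π (f (x + t) + f x) + π (f (y + t) + f y) = 0 := by
        rw [← map_add]; exact h0
      have h2 := add_eq_zero_iff_eq.mp h1
      simp only [hS, Set.mem_setOf_eq, ← map_add]
      exact h2.symm
    have d1 : x ≠ x + t := by
      intro h
      apply ht
      have := congrArg (· + t) h
      simp only [add_assoc, addself, add_zero] at this
      have h2 := left_eq_add.mp h
      exact h2
    have d2 : x + t ≠ y := by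
      intro h
      apply hxyt
      have := congrArg (· + t) h
      simpa [add_assoc, addself] using this
    have : 2 < S.ncard := by
      rw [Set.two_lt_ncard (Set.toFinite S)]
      exact ⟨x, hx, x + t, hxt, y, hy, d1, hxy, d2⟩
    omega
  · intro hEmpty a ha b
    by_contra hgt
    push_neg at hgt
    obtain ⟨x, hx, y, hy, z, hz, hxy, hxz, hyz⟩ :=
      (Set.two_lt_ncard (Set.toFinite _)).mp hgt
    simp only [Set.mem_setOf_eq] at hx hy hz
    -- among x, y, z two have distinct derivative values
    have main : ∀ u v : Fin n → ZMod 2, u ≠ v →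
        π (f (u + a)) + π (f u) = b → π (f (v + a)) + π (f v) = b →
        f (u + a) + f u ≠ f (v + a) + f v → False := by
      intro u v huv hub hvb hD
      apply Set.eq_empty_iff_forall_notMem.mp hEmpty ((f (u + a) + f u) + (f (v + a) + f v))
      constructor
      · refine ⟨u, v, a, huv, ha, ?_, (Bf_add f u v a).symm⟩
        intro h
        apply hD
        rw [h]
        have : v + a + a = v := by rw [add_assoc, addself, add_zero]
        rw [this, add_comm]
      · have : π ((f (u + a) + f u) + (f (v + a) + f v)) = 0 := by
          rw [map_add, map_add, map_add, hub, hvb, addself]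
        exact this
    by_cases h1 : f (x + a) + f x = f (y + a) + f y
    · by_cases h2 : f (x + a) + f x = f (z + a) + f z
      · -- all three equal: contradicts APN of f
        have key := hf a ha (f (x + a) + f x)
        have : 2 < {w : Fin n → ZMod 2 | f (w + a) + f w = f (x + a) + f x}.ncard := by
          rw [Set.two_lt_ncard (Set.toFinite _)]
          exact ⟨x, rfl, y, h1.symm, z, h2.symm, hxy, hxz, hyz⟩
        omega
      · exact main x z hxz hx hz h2
    · exact main x y hxy hx hy h1
end

section
/- Let f : F_2^n → F_2^m and g : F_2^n → F_2 be such that F(x) := (f(x), g(x)) is an APN function from F_2^n to F_2^m ⊕ F_2. Let u be a nonzero element of F_2^m. Then the function x ↦ f(x) + u·g(x) is APN if and only if whenever f(x+t)+f(x)+f(y+t)+f(y) = u for some x, y, t ∈ F_2^n, it holds that g(x+t)+g(x)+g(y+t)+g(y) = 0. -/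
private lemma addself_s2 {M : Type*} [AddCommGroup M] [Module (ZMod 2) M] (v : M) :
    v + v = 0 := by
  have h : (2 : ZMod 2) • v = v + v := two_smul _ v
  rw [show (2 : ZMod 2) = 0 by decide, zero_smul] at h
  exact h.symm

private lemma addcancel {M : Type*} [AddCommGroup M] [Module (ZMod 2) M] {v w : M}
    (h : v + w = 0) : v = w := by
  calc v = v + (w + w) := by rw [addself_s2, add_zero]
    _ = (v + w) + w := by abel
    _ = w := by rw [h, zero_add]

theorem stmt2 (n m : ℕ)
    (f : (Fin n → ZMod 2) → (Fin m → ZMod 2))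
    (g : (Fin n → ZMod 2) → ZMod 2)
    (hF : IsAPN (fun x => ((f x, g x) : (Fin m → ZMod 2) × ZMod 2)))
    (u : Fin m → ZMod 2) (hu : u ≠ 0) :
    IsAPN (fun x => f x + g x • u) ↔
      ∀ x y t : Fin n → ZMod 2,
        f (x + t) + f x + f (y + t) + f y = u →
        g (x + t) + g x + g (y + t) + g y = 0 := by
  have quad : ∀ a b : ZMod 2, a + b + a + b = 0 := by decide
  have quad' : ∀ a b : ZMod 2, a + b + b + a = 0 := by decide
  constructor
  · intro hAPN x y t hf
    by_contra hgne
    have hg1 : g (x + t) + g x + g (y + t) + g y = 1 := by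
      have h01 : ∀ c : ZMod 2, c ≠ 0 → c = 1 := by decide
      exact h01 _ hgne
    have ht : t ≠ 0 := by
      rintro rfl
      apply hu
      rw [← hf]
      simp only [add_zero]
      rw [show f x + f x + f y + f y = (f x + f x) + (f y + f y) by abel,
        addself_s2, addself_s2, add_zero]
    set b : Fin m → ZMod 2 := (f (x + t) + g (x + t) • u) + (f x + g x • u) with hb
    have hxy : x ≠ y := by
      rintro rfl
      rw [quad] at hg1
      exact absurd hg1 (by decide)
    have hxyt : x ≠ y + t := by
      rintro rfl
      rw [show y + t + t = y by rw [add_assoc, addself_s2, add_zero]] at hg1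
      rw [quad'] at hg1
      exact absurd hg1 (by decide)
    have hyyt : y ≠ y + t := fun h => ht (left_eq_add.mp h)
    have hyS : (f (y + t) + g (y + t) • u) + (f y + g y • u) = b := by
      apply addcancel
      calc ((f (y + t) + g (y + t) • u) + (f y + g y • u))
            + ((f (x + t) + g (x + t) • u) + (f x + g x • u))
          = (f (x + t) + f x + f (y + t) + f y)
            + (g (x + t) + g x + g (y + t) + g y) • u := by
            rw [add_smul, add_smul, add_smul]; abel
        _ = u + (1 : ZMod 2) • u := by rw [hf, hg1]
        _ = 0 := by rw [one_smul]; exact addself_s2 u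
    have hcard := hAPN t ht b
    have h3 : 2 < {z : Fin n → ZMod 2 |
        (fun x => f x + g x • u) (z + t) + (fun x => f x + g x • u) z = b}.ncard := by
      rw [Set.two_lt_ncard (Set.toFinite _)]
      refine ⟨x, ?_, y, ?_, y + t, ?_, hxy, hxyt, hyyt⟩
      · simp only [Set.mem_setOf_eq, hb]
      · simpa only [Set.mem_setOf_eq] using hyS
      · simp only [Set.mem_setOf_eq]
        rw [show y + t + t = y by rw [add_assoc, addself_s2, add_zero], ← hyS]
        abel
    omega
  · intro hcond a ha b
    by_contra hle
    push_neg at hle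
    rw [Set.two_lt_ncard (Set.toFinite _)] at hle
    obtain ⟨x1, hx1, x2, hx2, x3, hx3, h12, h13, h23⟩ := hle
    simp only [Set.mem_setOf_eq] at hx1 hx2 hx3
    have key : ∀ p q : Fin n → ZMod 2,
        (f (p + a) + g (p + a) • u) + (f p + g p • u) = b →
        (f (q + a) + g (q + a) • u) + (f q + g q • u) = b →
        g (p + a) + g p = g (q + a) + g q ∧ f (p + a) + f p = f (q + a) + f q := by
      intro p q hp hq
      have hpq : ((f (p + a) + g (p + a) • u) + (f p + g p • u))
          + ((f (q + a) + g (q + a) • u) + (f q + g q • u)) = 0 := by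
        rw [hp, hq]; exact addself_s2 b
      have hsum : (f (p + a) + f p + f (q + a) + f q)
          + (g (p + a) + g p + g (q + a) + g q) • u = 0 := by
        rw [add_smul, add_smul, add_smul, ← hpq]; abel
      have hgcase : g (p + a) + g p + g (q + a) + g q = 0 ∨
          g (p + a) + g p + g (q + a) + g q = 1 := by
        have : ∀ c : ZMod 2, c = 0 ∨ c = 1 := by decide
        exact this _
      rcases hgcase with h0 | h1
      · have hf0 : f (p + a) + f p + f (q + a) + f q = 0 := by
          rw [h0, zero_smul, add_zero] at hsum; exact hsum
        constructor
        · exact addcancel (by rw [← add_assoc]; exact h0)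
        · exact addcancel (by rw [← add_assoc]; exact hf0)
      · have hfu : f (p + a) + f p + f (q + a) + f q = u := by
          rw [h1, one_smul] at hsum
          exact addcancel hsum
        have h0 := hcond p q a hfu
        rw [h0] at h1
        exact absurd h1 (by decide)
    obtain ⟨hg12, hf12⟩ := key x2 x1 hx2 hx1
    obtain ⟨hg13, hf13⟩ := key x3 x1 hx3 hx1
    have hcard := hF a ha (f (x1 + a) + f x1, g (x1 + a) + g x1)
    have h3 : 2 < {z : Fin n → ZMod 2 |
        (fun x => ((f x, g x) : (Fin m → ZMod 2) × ZMod 2)) (z + a)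
          + (fun x => ((f x, g x) : (Fin m → ZMod 2) × ZMod 2)) z
          = (f (x1 + a) + f x1, g (x1 + a) + g x1)}.ncard := by
      rw [Set.two_lt_ncard (Set.toFinite _)]
      refine ⟨x1, ?_, x2, ?_, x3, ?_, h12, h13, h23⟩
      · simp only [Set.mem_setOf_eq, Prod.mk_add_mk]
      · simp only [Set.mem_setOf_eq, Prod.mk_add_mk, Prod.mk.injEq]
        exact ⟨hf12, hg12⟩
      · simp only [Set.mem_setOf_eq, Prod.mk_add_mk, Prod.mk.injEq]
        exact ⟨hf13, hg13⟩
    omega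
end

section
/- Let n = 2k be even with k > 1, and let f(x) = x^{2^n - 2} be the inverse function on F_{2^n}. For a nonzero a ∈ F_{2^n} and b ∈ F_{2^n}: the equation f(x+a) + f(x) = b has 4 solutions in F_{2^n} if and only if b = a^{-1}, and in that case the solution set is {0, a, ωa, ω²a}, where ω is a primitive cube root of unity in F_{2^2} \ F_2 ⊆ F_{2^n}. -/
theorem stmt4 (k : ℕ) (hk : 1 < k) (n : ℕ) (hn : n = 2 * k)
    (f : GaloisField 2 n → GaloisField 2 n)
    (hf : ∀ x, f x = x ^ (2 ^ n - 2))
    (ω : GaloisField 2 n) (hω3 : ω ^ 3 = 1) (hω1 : ω ≠ 1)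
    (a : GaloisField 2 n) (ha : a ≠ 0) (b : GaloisField 2 n) :
    ({x : GaloisField 2 n | f (x + a) + f x = b}.ncard = 4 ↔ b = a⁻¹) ∧
      (b = a⁻¹ →
        {x : GaloisField 2 n | f (x + a) + f x = b} = {0, a, ω * a, ω ^ 2 * a}) := by
  have hn0 : n ≠ 0 := by omega
  haveI : Fintype (GaloisField 2 n) := Fintype.ofFinite _
  have hcard : Fintype.card (GaloisField 2 n) = 2 ^ n := by
    rw [← Nat.card_eq_fintype_card]; exact GaloisField.card 2 n hn0
  have hpow : 16 ≤ 2 ^ n := by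
    calc (16:ℕ) = 2 ^ 4 := by norm_num
    _ ≤ 2 ^ n := Nat.pow_le_pow_right (by norm_num) (by omega)
  have h2 : (2 : GaloisField 2 n) = 0 := by
    have := CharP.cast_eq_zero (GaloisField 2 n) 2
    simpa using this
  -- f is the inverse
  have hinv : ∀ x, f x = x⁻¹ := by
    intro x
    rw [hf]
    rcases eq_or_ne x 0 with h | h
    · subst h
      rw [zero_pow (by omega : 2 ^ n - 2 ≠ 0), inv_zero]
    · have h1 : x ^ (2 ^ n - 1) = 1 := by
        have := FiniteField.pow_card_sub_one_eq_one x h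
        rwa [hcard] at this
      have hm : x ^ (2 ^ n - 2) * x = 1 := by
        rw [← pow_succ]
        have e : 2 ^ n - 2 + 1 = 2 ^ n - 1 := by omega
        rw [e, h1]
      exact eq_inv_of_mul_eq_one_left hm
  -- ω facts
  have hωne0 : ω ≠ 0 := by
    intro h; rw [h] at hω3; simp at hω3
  have hω21 : ω ^ 2 ≠ 1 := fun h => hω1 (by rw [← hω3, pow_succ, h, one_mul])
  have hωsum : ω ^ 2 + ω + 1 = 0 := by
    have hfac : (ω - 1) * (ω ^ 2 + ω + 1) = 0 := by linear_combination hω3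
    rcases mul_eq_zero.mp hfac with h | h
    · exact absurd (sub_eq_zero.mp h) hω1
    · exact h
  have hω2 : ω ^ 2 = ω + 1 := by linear_combination hωsum - (ω + 1) * h2
  have hωinv : ω⁻¹ = ω ^ 2 := inv_eq_of_mul_eq_one_left (by linear_combination hω3)
  have hω2inv : (ω ^ 2)⁻¹ = ω := inv_eq_of_mul_eq_one_left (by linear_combination hω3)
  have hωω2 : ω ≠ ω ^ 2 := by
    intro h
    exact hω1 ((mul_left_cancel₀ hωne0 (show ω * 1 = ω * ω by rw [mul_one]; linear_combination h)).symm)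
  have hs1 : ω + ω ^ 2 = 1 := by linear_combination hωsum - h2
  -- membership characterization for b = a⁻¹
  have hmem : ∀ x : GaloisField 2 n,
      ((x + a)⁻¹ + x⁻¹ = a⁻¹) ↔ (x = 0 ∨ x = a ∨ x = ω * a ∨ x = ω ^ 2 * a) := by
    intro x
    constructor
    · intro h
      rcases eq_or_ne x 0 with h0 | h0
      · exact Or.inl h0
      rcases eq_or_ne x a with hxa | hxa
      · exact Or.inr (Or.inl hxa)
      have hxa0 : x + a ≠ 0 := by
        intro hc
        exact hxa (by linear_combination hc - a * h2)
      have key : x * (x + a) = a * a := by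
        field_simp at h
        linear_combination h + (x ^ 2 - a ^ 2) * h2
      have quad : (x + ω * a) * (x + ω ^ 2 * a) = 0 := by
        linear_combination key + (a * x) * hωsum + (a * a) * hω3 + (a * a - a * x) * h2
      rcases mul_eq_zero.mp quad with hc | hc
      · exact Or.inr (Or.inr (Or.inl (by linear_combination hc - ω * a * h2)))
      · exact Or.inr (Or.inr (Or.inr (by linear_combination hc - ω ^ 2 * a * h2)))
    · intro h
      rcases h with h | h | h | h
      · subst h; simp
      · subst h
        rw [show x + x = 0 by linear_combination x * h2, inv_zero, zero_add]
      · subst h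
        rw [show ω * a + a = ω ^ 2 * a by linear_combination (-a) * hω2,
          mul_inv, mul_inv, hωinv, hω2inv]
        linear_combination a⁻¹ * hs1
      · subst h
        rw [show ω ^ 2 * a + a = ω * a by linear_combination a * hω2 + a * h2,
          mul_inv, mul_inv, hωinv, hω2inv]
        linear_combination a⁻¹ * hs1
  -- the solution set when b = a⁻¹
  have hset : ∀ c : GaloisField 2 n, c = a⁻¹ →
      {x : GaloisField 2 n | f (x + a) + f x = c} = {0, a, ω * a, ω ^ 2 * a} := by
    intro c hc
    subst hc
    ext x
    simp only [Set.mem_setOf_eq, hinv, Set.mem_insert_iff, Set.mem_singleton_iff]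
    exact hmem x
  -- distinctness and cardinality 4
  have hmulne : ∀ u v : GaloisField 2 n, u ≠ v → u * a ≠ v * a := by
    intro u v h hc
    exact h (mul_right_cancel₀ ha hc)
  have h4 : ({0, a, ω * a, ω ^ 2 * a} : Set (GaloisField 2 n)).ncard = 4 := by
    have d1 : (0 : GaloisField 2 n) ∉ ({a, ω * a, ω ^ 2 * a} : Set (GaloisField 2 n)) := by
      simp only [Set.mem_insert_iff, Set.mem_singleton_iff]
      push_neg
      exact ⟨Ne.symm ha, Ne.symm (mul_ne_zero hωne0 ha),
        Ne.symm (mul_ne_zero (pow_ne_zero 2 hωne0) ha)⟩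
    have d2 : a ∉ ({ω * a, ω ^ 2 * a} : Set (GaloisField 2 n)) := by
      simp only [Set.mem_insert_iff, Set.mem_singleton_iff]
      push_neg
      constructor
      · intro hc
        exact hω1.symm (mul_right_cancel₀ ha (by rw [one_mul]; exact hc))
      · intro hc
        exact hω21.symm (mul_right_cancel₀ ha (by rw [one_mul]; exact hc))
    have d3 : ω * a ∉ ({ω ^ 2 * a} : Set (GaloisField 2 n)) := by
      simp only [Set.mem_singleton_iff]
      exact hmulne _ _ hωω2
    rw [Set.ncard_insert_of_notMem d1, Set.ncard_insert_of_notMem d2,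
      Set.ncard_insert_of_notMem d3, Set.ncard_singleton]
  refine ⟨⟨?_, fun hb => by rw [hset b hb]; exact h4⟩, hset b⟩
  -- forward direction: ncard = 4 → b = a⁻¹
  intro h4'
  by_contra hb
  have hmem' : ∀ x : GaloisField 2 n,
      x ∈ {x : GaloisField 2 n | f (x + a) + f x = b} ↔ (x + a)⁻¹ + x⁻¹ = b := by
    intro x; simp [hinv]
  rcases eq_or_ne b 0 with hb0 | hb0
  · -- b = 0 : empty solution set
    subst hb0
    have hempty : {x : GaloisField 2 n | f (x + a) + f x = 0} = ∅ := by
      ext x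
      simp only [Set.mem_empty_iff_false, iff_false]
      intro hx
      have hc := (hmem' x).mp hx
      rcases eq_or_ne x 0 with h0 | h0
      · rw [h0, zero_add, inv_zero, add_zero] at hc
        exact ha (inv_eq_zero.mp hc)
      rcases eq_or_ne x a with hxa | hxa
      · subst hxa
        rw [show x + x = 0 by linear_combination x * h2, inv_zero, zero_add] at hc
        exact h0 (inv_eq_zero.mp hc)
      have hxa0 : x + a ≠ 0 := by
        intro hcc
        exact hxa (by linear_combination hcc - a * h2)
      have heq : (x + a)⁻¹ = x⁻¹ := by linear_combination hc - x⁻¹ * h2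
      have := inv_injective heq
      exact ha (by linear_combination this)
    rw [hempty] at h4'
    simp at h4'
  · -- b ≠ 0 : at most 2 solutions
    have hkey : ∀ x ∈ {x : GaloisField 2 n | f (x + a) + f x = b},
        a = b * (x * (x + a)) := by
      intro x hx
      have hx0 : x ≠ 0 := by
        intro hc
        subst hc
        have := (hmem' 0).mp hx
        rw [zero_add, inv_zero, add_zero] at this
        exact hb this.symm
      have hxa : x ≠ a := by
        intro hc
        subst hc
        have := (hmem' x).mp hx
        rw [show x + x = 0 by linear_combination x * h2, inv_zero, zero_add] at this
        exact hb this.symm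
      have hxa0 : x + a ≠ 0 := by
        intro hcc
        exact hxa (by linear_combination hcc - a * h2)
      have hx' := (hmem' x).mp hx
      have e1 : (x + a)⁻¹ * (x + a) = 1 := inv_mul_cancel₀ hxa0
      have e2 : x⁻¹ * x = 1 := inv_mul_cancel₀ hx0
      have key : x + (x + a) = b * (x * (x + a)) := by
        calc x + (x + a) = ((x + a)⁻¹ * (x + a)) * x + (x⁻¹ * x) * (x + a) := by
              rw [e1, e2]; ring
        _ = ((x + a)⁻¹ + x⁻¹) * (x * (x + a)) := by ring
        _ = b * (x * (x + a)) := by rw [hx']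
      linear_combination key - x * h2
    have hpair : ∀ x ∈ {x : GaloisField 2 n | f (x + a) + f x = b},
        ∀ y ∈ {x : GaloisField 2 n | f (x + a) + f x = b}, y = x ∨ y = x + a := by
      intro x hx y hy
      have k1 := hkey x hx
      have k2 := hkey y hy
      have hz : (y - x) * ((x + y + a) * b) = 0 := by linear_combination k1 - k2
      rcases mul_eq_zero.mp hz with h | h
      · exact Or.inl (sub_eq_zero.mp h)
      rcases mul_eq_zero.mp h with h | h
      · exact Or.inr (by linear_combination h - (x + a) * h2)
      · exact absurd h hb0
    rcases Set.eq_empty_or_nonempty {x : GaloisField 2 n | f (x + a) + f x = b} with hS | hS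
    · rw [hS] at h4'
      simp at h4'
    · obtain ⟨x0, hx0S⟩ := hS
      have hsub : {x : GaloisField 2 n | f (x + a) + f x = b} ⊆ {x0, x0 + a} := by
        intro y hy
        rcases hpair x0 hx0S y hy with h | h <;> simp [h]
      have hle := Set.ncard_le_ncard hsub (Set.toFinite _)
      have hle2 : ({x0, x0 + a} : Set (GaloisField 2 n)).ncard ≤ 2 := by
        refine le_trans (Set.ncard_insert_le _ _) ?_
        simp [Set.ncard_singleton]
      omega
end

section
/- Let n = 2k be even with k > 1 and f(x) = x^{2^n-2} the inverse function on F_{2^n}. Let g : F_{2^n} → F_2 be a Boolean function. Then F : F_{2^n} → F_{2^n} ⊕ F_2 defined by F(x) = (f(x), g(x)) is APN if and only if g(0) + g(a) + g(ωa) + g(ω²a) = 1 for every nonzero a ∈ F_{2^n}, where ω ∈ F_{2^2} \ F_2. -/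
private lemma quad_roots {K : Type*} [Field K] (h2 : (2:K) = 0) {a d x y : K}
    (hx : x^2 + a*x = d) (hy : y^2 + a*y = d) : y = x ∨ y = x + a := by
  have h : (x + y) * (x + y + a) = 0 := by
    linear_combination hx - hy + (y^2 + a*y + x*y) * h2
  rcases mul_eq_zero.mp h with h | h
  · left; linear_combination h - x * h2
  · right; linear_combination h - (x + a) * h2

private lemma sol_ne {K : Type*} [Field K] (h2 : (2:K) = 0) {a b x : K}
    (hba : b ≠ a⁻¹) (hx : (x+a)⁻¹ + x⁻¹ = b) : x ≠ 0 ∧ x + a ≠ 0 := by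
  constructor
  · rintro rfl
    simp only [zero_add, inv_zero, add_zero] at hx
    exact hba hx.symm
  · intro h
    have hxa : x = a := by linear_combination h - a * h2
    rw [h, hxa, inv_zero, zero_add] at hx
    exact hba hx.symm

private lemma sol_quad {K : Type*} [Field K] (h2 : (2:K) = 0) {a b x : K}
    (hb0 : b ≠ 0) (hx0 : x ≠ 0) (hxa : x + a ≠ 0)
    (hx : (x+a)⁻¹ + x⁻¹ = b) : x^2 + a*x = a * b⁻¹ := by
  field_simp at hx ⊢
  linear_combination hx + (x^2*b + a*x*b - x - a) * h2

private lemma mem_omega {K : Type*} [Field K] (h2 : (2:K) = 0) {a ω : K} (ha : a ≠ 0)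
    (hω0 : ω ≠ 0) (hω2 : ω^2 = ω + 1) :
    (ω*a + a)⁻¹ + (ω*a)⁻¹ = a⁻¹ := by
  have h1 : ω*a + a = ω^2*a := by linear_combination a * hω2 + (ω*a - ω^2*a + a)*h2
  have hω20 : ω^2 ≠ 0 := pow_ne_zero _ hω0
  rw [h1]
  field_simp
  linear_combination -hω2

private lemma pair_ncard_le {K : Type*} (u v : K) :
    ({u, v} : Set K).ncard ≤ 2 := by
  refine le_trans (Set.ncard_insert_le _ _) ?_
  simp [Set.ncard_singleton]

theorem stmt5 (k : ℕ) (hk : 1 < k) (n : ℕ) (hn : n = 2 * k)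
    (f : GaloisField 2 n → GaloisField 2 n)
    (hf : ∀ x, f x = x ^ (2 ^ n - 2))
    (ω : GaloisField 2 n) (hω3 : ω ^ 3 = 1) (hω1 : ω ≠ 1)
    (g : GaloisField 2 n → ZMod 2) :
    IsAPN (fun x => ((f x, g x) : GaloisField 2 n × ZMod 2)) ↔
      ∀ a : GaloisField 2 n, a ≠ 0 →
        g 0 + g a + g (ω * a) + g (ω ^ 2 * a) = 1 := by
  have hn0 : n ≠ 0 := by omega
  haveI : Fintype (GaloisField 2 n) := Fintype.ofFinite _
  have h2 : (2 : GaloisField 2 n) = 0 := by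
    have h := CharP.cast_eq_zero (GaloisField 2 n) 2
    exact_mod_cast h
  have hcard : Fintype.card (GaloisField 2 n) = 2 ^ n := by
    rw [← Nat.card_eq_fintype_card]; exact GaloisField.card 2 n hn0
  have hpow4 : 4 ≤ 2 ^ n := by
    calc (4:ℕ) = 2^2 := rfl
    _ ≤ 2^n := Nat.pow_le_pow_right (by norm_num) (by omega)
  -- f is the inverse map
  have hf' : ∀ x : GaloisField 2 n, f x = x⁻¹ := by
    intro x
    rcases eq_or_ne x 0 with rfl | hx
    · rw [hf, zero_pow (by omega), inv_zero]
    · rw [hf]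
      refine eq_inv_of_mul_eq_one_left ?_
      rw [← pow_succ, show 2^n - 2 + 1 = 2^n - 1 by omega, ← hcard]
      exact FiniteField.pow_card_sub_one_eq_one x hx
  -- ω facts
  have hω0 : ω ≠ 0 := by
    intro h; rw [h] at hω3; simp at hω3
  have hωadd1 : ω + 1 ≠ 0 := by
    intro h; exact hω1 (by linear_combination h - h2)
  have hω2 : ω^2 = ω + 1 := by
    have hfac : (ω + 1) * (ω^2 + ω + 1) = 0 := by
      linear_combination hω3 + (ω^2 + ω + 1) * h2
    rcases mul_eq_zero.mp hfac with h | h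
    · exact absurd h hωadd1
    · linear_combination h - (ω + 1) * h2
  have hω21 : ω^2 ≠ 1 := by
    intro h
    exact hω1 (by linear_combination hω3 - ω * h)
  have hωne : ω ≠ ω^2 := by
    intro h
    have h10 : (1 : GaloisField 2 n) = 0 := by
      linear_combination h - hω2 + (ω^2 - ω) * h2
    exact one_ne_zero h10
  constructor
  · -- APN → condition
    intro hAPN a ha
    by_contra hne
    have hsum : g 0 + g a + g (ω*a) + g (ω^2*a) = 0 := by
      have hd : ∀ z : ZMod 2, ¬ z = 1 → z = 0 := by decide
      exact hd _ hne
    have hc : g (ω^2*a) + g (ω*a) = g a + g 0 := by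
      have hd : ∀ u v : ZMod 2, u + v = 0 → u = v := by decide
      refine hd _ _ ?_
      linear_combination hsum
    have key := hAPN a ha (a⁻¹, g a + g 0)
    have hsub : ({0, a, ω*a, ω^2*a} : Set (GaloisField 2 n)) ⊆
        {x : GaloisField 2 n |
          (fun x => ((f x, g x) : GaloisField 2 n × ZMod 2)) (x + a)
          + (fun x => ((f x, g x) : GaloisField 2 n × ZMod 2)) x = (a⁻¹, g a + g 0)} := by
      have haa : a + a = 0 := by linear_combination a * h2
      have h1 : ω*a + a = ω^2*a := by linear_combination a * hω2 + (ω*a - ω^2*a + a)*h2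
      have h1' : ω^2*a + a = ω*a := by linear_combination a * hω2 + a * h2
      rintro x (rfl | rfl | rfl | rfl) <;>
        simp only [Set.mem_setOf_eq, Prod.mk_add_mk, Prod.mk.injEq, hf']
      · constructor
        · rw [zero_add, inv_zero, add_zero]
        · rw [zero_add]
      · constructor
        · rw [haa, inv_zero, zero_add]
        · rw [haa]; exact add_comm _ _
      · refine ⟨mem_omega h2 ha hω0 hω2, ?_⟩
        rw [h1]; exact hc
      · constructor
        · rw [h1']
          have hmo := mem_omega h2 ha hω0 hω2
          rw [h1] at hmo
          linear_combination hmo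
        · rw [h1']
          linear_combination hc
    have hD : ({0, a, ω*a, ω^2*a} : Set (GaloisField 2 n)).ncard = 4 := by
      have d1 : (0 : GaloisField 2 n) ∉ ({a, ω*a, ω^2*a} : Set (GaloisField 2 n)) := by
        simp only [Set.mem_insert_iff, Set.mem_singleton_iff, not_or]
        exact ⟨fun h => ha h.symm, fun h => mul_ne_zero hω0 ha h.symm,
          fun h => mul_ne_zero (pow_ne_zero _ hω0) ha h.symm⟩
      have d2 : a ∉ ({ω*a, ω^2*a} : Set (GaloisField 2 n)) := by
        simp only [Set.mem_insert_iff, Set.mem_singleton_iff, not_or]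
        constructor
        · intro h; exact hω1 ((mul_left_injective₀ ha).eq_iff.mp (by rw [one_mul, ← h])).symm
        · intro h; exact hω21 ((mul_left_injective₀ ha).eq_iff.mp (by rw [one_mul, ← h])).symm
      have d3 : ω*a ∉ ({ω^2*a} : Set (GaloisField 2 n)) := by
        simp only [Set.mem_singleton_iff]
        intro h; exact hωne ((mul_left_injective₀ ha).eq_iff.mp h)
      rw [Set.ncard_insert_of_notMem d1, Set.ncard_insert_of_notMem d2,
        Set.ncard_insert_of_notMem d3, Set.ncard_singleton]
    have hle := Set.ncard_le_ncard hsub (Set.toFinite _)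
    rw [hD] at hle
    omega
  · -- condition → APN
    intro hcond a ha b
    obtain ⟨b1, b2⟩ := b
    set T := {x : GaloisField 2 n |
          (fun x => ((f x, g x) : GaloisField 2 n × ZMod 2)) (x + a)
          + (fun x => ((f x, g x) : GaloisField 2 n × ZMod 2)) x = (b1, b2)} with hT
    have hmem : ∀ x : GaloisField 2 n,
        x ∈ T ↔ ((x+a)⁻¹ + x⁻¹ = b1 ∧ g (x+a) + g x = b2) := by
      intro x
      rw [hT]
      simp only [Set.mem_setOf_eq, Prod.mk_add_mk, Prod.mk.injEq, hf']
    rcases eq_or_ne b1 a⁻¹ with rfl | hba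
    · -- four-solution case, g condition splits them
      have haa : a + a = 0 := by linear_combination a * h2
      have h1 : ω*a + a = ω^2*a := by linear_combination a * hω2 + (ω*a - ω^2*a + a)*h2
      have h1' : ω^2*a + a = ω*a := by linear_combination a * hω2 + a * h2
      have ha0 : a⁻¹ ≠ 0 := inv_ne_zero ha
      have hDsub : ∀ x ∈ T, x = 0 ∨ x = a ∨ x = ω*a ∨ x = ω^2*a := by
        intro x hx
        rw [hmem] at hx
        obtain ⟨hx1, _⟩ := hx
        rcases eq_or_ne x 0 with rfl | hx0
        · left; rfl
        rcases eq_or_ne (x + a) 0 with hxa | hxa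
        · right; left; linear_combination hxa - a * h2
        right; right
        have hq : x^2 + a*x = a * (a⁻¹)⁻¹ := sol_quad h2 ha0 hx0 hxa hx1
        rw [inv_inv] at hq
        have hqω : (ω*a)^2 + a*(ω*a) = a * a := by
          linear_combination a^2 * hω2 + ω*a^2 * h2
        rcases quad_roots h2 hqω (by rw [hq]) with h | h
        · left; exact h
        · right; rw [h, h1]
      have hcnd := hcond a ha
      have hc01 : (g a + g 0) + (g (ω^2*a) + g (ω*a)) = 1 := by
        linear_combination hcnd
      have hcneq : g a + g 0 ≠ g (ω^2*a) + g (ω*a) := by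
        have hd : ∀ u v : ZMod 2, u + v = 1 → u ≠ v := by decide
        exact hd _ _ hc01
      by_cases hb2 : b2 = g a + g 0
      · have hsub : T ⊆ ({0, a} : Set (GaloisField 2 n)) := by
          intro x hx
          have hx' := hx
          rw [hmem] at hx'
          obtain ⟨_, hx2⟩ := hx'
          rcases hDsub x hx with rfl | rfl | rfl | rfl
          · left; rfl
          · right; rfl
          · exfalso; rw [h1] at hx2
            exact hcneq (by rw [← hb2, ← hx2])
          · exfalso; rw [h1'] at hx2
            refine hcneq ?_
            rw [← hb2, ← hx2]; exact add_comm _ _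
        exact le_trans (Set.ncard_le_ncard hsub (Set.toFinite _)) (pair_ncard_le _ _)
      · have hsub : T ⊆ ({ω*a, ω^2*a} : Set (GaloisField 2 n)) := by
          intro x hx
          have hx' := hx
          rw [hmem] at hx'
          obtain ⟨_, hx2⟩ := hx'
          rcases hDsub x hx with rfl | rfl | rfl | rfl
          · exfalso; rw [zero_add] at hx2; exact hb2 (by rw [← hx2])
          · exfalso; rw [haa] at hx2
            exact hb2 (by rw [← hx2]; exact add_comm _ _)
          · left; rfl
          · right; rfl
        exact le_trans (Set.ncard_le_ncard hsub (Set.toFinite _)) (pair_ncard_le _ _)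
    · rcases eq_or_ne b1 0 with rfl | hb0
      · -- no solutions
        have hsub : T ⊆ (∅ : Set (GaloisField 2 n)) := by
          intro x hx
          rw [hmem] at hx
          obtain ⟨hx1, _⟩ := hx
          exfalso
          have hinv : (x + a)⁻¹ = x⁻¹ := by linear_combination hx1 - x⁻¹ * h2
          have hxx := inv_injective hinv
          exact ha (by linear_combination hxx)
        have hle := Set.ncard_le_ncard hsub (Set.toFinite _)
        rw [Set.ncard_empty] at hle
        omega
      · -- quadratic case: at most two solutions
        rcases Set.eq_empty_or_nonempty T with hTe | ⟨x0, hx0⟩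
        · rw [hTe]; simp
        have hx0' := hx0
        rw [hmem] at hx0'
        obtain ⟨hx01, _⟩ := hx0'
        obtain ⟨hx00, hx0a⟩ := sol_ne h2 hba hx01
        have hq0 : x0^2 + a*x0 = a * b1⁻¹ := sol_quad h2 hb0 hx00 hx0a hx01
        have hsub : T ⊆ ({x0, x0 + a} : Set (GaloisField 2 n)) := by
          intro y hy
          rw [hmem] at hy
          obtain ⟨hy1, _⟩ := hy
          obtain ⟨hy0, hya⟩ := sol_ne h2 hba hy1
          have hqy : y^2 + a*y = a * b1⁻¹ := sol_quad h2 hb0 hy0 hya hy1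
          exact quad_roots h2 hq0 hqy
        exact le_trans (Set.ncard_le_ncard hsub (Set.toFinite _)) (pair_ncard_le _ _)
end

section
/- Let H be a hyperplane of F_2^n, e₀ ∈ F_2^n \ H, and f, g : H → F_2^m. Define F : F_2^n → F_2^m by F(x) = f(x) for x ∈ H and F(x + e₀) = g(x) for x ∈ H. Then F is APN if and only if: (1) both f and g are APN as functions on H ≅ F_2^{n-1}, and (2) f(x+a)+f(x)+g(y+a)+g(y) ≠ 0 for all x, y ∈ H and all nonzero a ∈ H. -/
section Aux

variable {M : Type*} [AddCommGroup M] [Module (ZMod 2) M]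

lemma char2_add_self (x : M) : x + x = 0 := by
  have h2 : (2 : ZMod 2) = 0 := by decide
  calc x + x = (2 : ZMod 2) • x := (two_smul (ZMod 2) x).symm
    _ = 0 := by rw [h2, zero_smul]

lemma char2_eq_of_add_eq_zero {u v : M} (h : u + v = 0) : u = v := by
  calc u = u + (v + v) := by rw [char2_add_self, add_zero]
    _ = (u + v) + v := by abel
    _ = v := by rw [h, zero_add]

lemma split_ncard {n : ℕ} (H : Submodule (ZMod 2) (Fin n → ZMod 2))
    (e₀ : Fin n → ZMod 2) (he₀ : e₀ ∉ H)
    (hmem : ∀ v, v ∉ H → v + e₀ ∈ H) (P : (Fin n → ZMod 2) → Prop) :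
    {x | P x}.ncard = {x : H | P ↑x}.ncard + {x : H | P (↑x + e₀)}.ncard := by
  have hinj : Function.Injective (fun x : H => (↑x : Fin n → ZMod 2) + e₀) := by
    intro x y hxy
    exact Subtype.val_injective (add_right_cancel hxy)
  have hsplit : {x | P x} =
      (Subtype.val '' {x : H | P ↑x}) ∪
        ((fun x : H => (↑x : Fin n → ZMod 2) + e₀) '' {x : H | P (↑x + e₀)}) := by
    ext v
    simp only [Set.mem_setOf_eq, Set.mem_union, Set.mem_image]
    constructor
    · intro hv
      by_cases hvH : v ∈ H
      · exact Or.inl ⟨⟨v, hvH⟩, hv, rfl⟩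
      · refine Or.inr ⟨⟨v + e₀, hmem v hvH⟩, ?_, ?_⟩
        · show P (v + e₀ + e₀)
          rw [add_assoc, char2_add_self e₀, add_zero]; exact hv
        · show v + e₀ + e₀ = v
          rw [add_assoc, char2_add_self e₀, add_zero]
    · rintro (⟨x, hx, rfl⟩ | ⟨x, hx, rfl⟩) <;> exact hx
  have hdisj : Disjoint (Subtype.val '' {x : H | P ↑x})
      ((fun x : H => (↑x : Fin n → ZMod 2) + e₀) '' {x : H | P (↑x + e₀)}) := by
    rw [Set.disjoint_left]
    rintro v ⟨x, hx, rfl⟩ ⟨y, hy, hvy⟩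
    apply he₀
    have : e₀ = ((x - y : H) : Fin n → ZMod 2) := by
      push_cast
      rw [eq_sub_iff_add_eq, add_comm]
      exact hvy
    rw [this]; exact (x - y).2
  rw [hsplit, Set.ncard_union_eq hdisj (Set.toFinite _) (Set.toFinite _),
    Set.ncard_image_of_injective _ Subtype.val_injective,
    Set.ncard_image_of_injective _ hinj]

end Aux

theorem stmt6 (n m : ℕ) (hn : 3 ≤ n)
    (H : Submodule (ZMod 2) (Fin n → ZMod 2))
    (hH : Module.finrank (ZMod 2) H = n - 1)
    (e₀ : Fin n → ZMod 2) (he₀ : e₀ ∉ H)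
    (f g : H → (Fin m → ZMod 2))
    (F : (Fin n → ZMod 2) → (Fin m → ZMod 2))
    (hF1 : ∀ x : H, F (x : Fin n → ZMod 2) = f x)
    (hF2 : ∀ x : H, F ((x : Fin n → ZMod 2) + e₀) = g x) :
    IsAPN F ↔
      (IsAPN f ∧ IsAPN g) ∧
        ∀ x y a : H, a ≠ 0 → f (x + a) + f x + g (y + a) + g y ≠ 0 := by
  -- every vector outside H lands in H after adding e₀
  have hspan_not_le : ¬ Submodule.span (ZMod 2) {e₀} ≤ H := by
    rw [Submodule.span_le, Set.singleton_subset_iff]; exact he₀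
  have hlt : H < H ⊔ Submodule.span (ZMod 2) {e₀} := left_lt_sup.mpr hspan_not_le
  have hfr := Submodule.finrank_lt_finrank_of_lt hlt
  rw [hH] at hfr
  have hle := Submodule.finrank_le (H ⊔ Submodule.span (ZMod 2) {e₀})
  rw [Module.finrank_fin_fun] at hle
  have htop : H ⊔ Submodule.span (ZMod 2) {e₀} = ⊤ := by
    apply Submodule.eq_top_of_finrank_eq
    rw [Module.finrank_fin_fun]
    omega
  have hmem : ∀ v, v ∉ H → v + e₀ ∈ H := by
    intro v hv
    have hv' : v ∈ H ⊔ Submodule.span (ZMod 2) {e₀} := htop ▸ Submodule.mem_top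
    rcases Submodule.mem_sup.mp hv' with ⟨y, hy, z, hz, hyz⟩
    rcases Submodule.mem_span_singleton.mp hz with ⟨t, rfl⟩
    rcases (by decide : ∀ t : ZMod 2, t = 0 ∨ t = 1) t with rfl | rfl
    · rw [zero_smul, add_zero] at hyz
      exact absurd (hyz ▸ hy) hv
    · rw [one_smul] at hyz
      have : v + e₀ = y := by rw [← hyz, add_assoc, char2_add_self e₀, add_zero]
      rw [this]; exact hy
  -- key computation for derivatives in direction of H
  have key1 : ∀ (a : H) (b : Fin m → ZMod 2),
      {x : Fin n → ZMod 2 | F (x + ↑a) + F x = b}.ncard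
        = {x : H | f (x + a) + f x = b}.ncard + {x : H | g (x + a) + g x = b}.ncard := by
    intro a b
    rw [split_ncard H e₀ he₀ hmem]
    congr 1
    · apply congrArg
      ext x
      simp only [Set.mem_setOf_eq, ← Submodule.coe_add, hF1]
    · apply congrArg
      ext x
      simp only [Set.mem_setOf_eq]
      rw [show (↑x : Fin n → ZMod 2) + e₀ + ↑a = ↑(x + a) + e₀ by push_cast; abel,
        hF2, hF2]
  -- key computation for derivatives outside H
  have key2 : ∀ (c : H) (b : Fin m → ZMod 2),
      {x : Fin n → ZMod 2 | F (x + (↑c + e₀)) + F x = b}.ncard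
        = 2 * {x : H | g (x + c) + f x = b}.ncard := by
    intro c b
    rw [split_ncard H e₀ he₀ hmem]
    have h1 : {x : H | F (↑x + (↑c + e₀)) + F ↑x = b} = {x : H | g (x + c) + f x = b} := by
      ext x
      simp only [Set.mem_setOf_eq]
      rw [show (↑x : Fin n → ZMod 2) + (↑c + e₀) = ↑(x + c) + e₀ by push_cast; abel,
        hF2, hF1]
    have h2 : {x : H | F (↑x + e₀ + (↑c + e₀)) + F (↑x + e₀) = b}
        = {x : H | f (x + c) + g x = b} := by
      ext x
      simp only [Set.mem_setOf_eq]
      have he : (↑x : Fin n → ZMod 2) + e₀ + (↑c + e₀) = ↑(x + c) := by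
        calc (↑x : Fin n → ZMod 2) + e₀ + (↑c + e₀) = ↑x + ↑c + (e₀ + e₀) := by abel
          _ = ↑(x + c) := by rw [char2_add_self e₀, add_zero, ← Submodule.coe_add]
      rw [he, hF1, hF2]
    rw [h1, h2]
    have h3 : {x : H | f (x + c) + g x = b}
        = (fun z : H => z + c) '' {x : H | g (x + c) + f x = b} := by
      ext x
      simp only [Set.mem_setOf_eq, Set.mem_image]
      constructor
      · intro hx
        refine ⟨x + c, ?_, by rw [add_assoc, char2_add_self c, add_zero]⟩
        rw [add_assoc, char2_add_self c, add_zero, add_comm]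
        exact hx
      · rintro ⟨z, hz, rfl⟩
        rw [add_assoc, char2_add_self c, add_zero, add_comm]
        exact hz
    rw [h3, Set.ncard_image_of_injective _ (add_left_injective c), two_mul]
  constructor
  · intro hAPN
    have hco : ∀ a : H, a ≠ 0 → (↑a : Fin n → ZMod 2) ≠ 0 := by
      intro a ha h0
      exact ha (Subtype.ext h0)
    refine ⟨⟨?_, ?_⟩, ?_⟩
    · intro a ha b
      have hk := hAPN ↑a (hco a ha) b
      rw [key1 a b] at hk
      omega
    · intro a ha b
      have hk := hAPN ↑a (hco a ha) b
      rw [key1 a b] at hk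
      omega
    · intro x y a ha hcontra
      set c : H := x + y with hc
      have hA : (↑c + e₀ : Fin n → ZMod 2) ≠ 0 := by
        intro h0
        exact he₀ ((char2_eq_of_add_eq_zero h0) ▸ c.2)
      have hk := hAPN (↑c + e₀) hA (g y + f x)
      rw [key2 c (g y + f x)] at hk
      have hx : x ∈ {z : H | g (z + c) + f z = g y + f x} := by
        show g (x + c) + f x = g y + f x
        have : x + c = y := by rw [hc, ← add_assoc, char2_add_self x, zero_add]
        rw [this]
      have hxa : x + a ∈ {z : H | g (z + c) + f z = g y + f x} := by
        show g (x + a + c) + f (x + a) = g y + f x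
        have h1 : x + a + c = y + a := by
          calc x + a + c = y + a + (x + x) := by rw [hc]; abel
            _ = y + a := by rw [char2_add_self x, add_zero]
        rw [h1]
        apply char2_eq_of_add_eq_zero
        calc (g (y + a) + f (x + a)) + (g y + f x)
            = f (x + a) + f x + g (y + a) + g y := by abel
          _ = 0 := hcontra
      have hne : x ≠ x + a := by
        intro h
        exact ha (by simpa using congrArg (fun z => z + x) h.symm )
      have h2card : 1 < {z : H | g (z + c) + f z = g y + f x}.ncard :=
        (Set.one_lt_ncard (Set.toFinite _)).mpr ⟨x, hx, x + a, hxa, hne⟩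
      omega
  · rintro ⟨⟨hf, hg⟩, hcond⟩
    intro A hA b
    by_cases hAH : A ∈ H
    · rw [show A = ((⟨A, hAH⟩ : H) : Fin n → ZMod 2) from rfl, key1 ⟨A, hAH⟩ b]
      set a : H := ⟨A, hAH⟩ with ha'
      have ha : a ≠ 0 := by
        intro h
        exact hA (congrArg Subtype.val h)
      by_cases hfb : {x : H | f (x + a) + f x = b}.ncard = 0
      · have := hg a ha b
        omega
      · obtain ⟨x, hx⟩ := Set.nonempty_of_ncard_ne_zero hfb
        simp only [Set.mem_setOf_eq] at hx
        have hgb : {y : H | g (y + a) + g y = b} = ∅ := by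
          rw [Set.eq_empty_iff_forall_notMem]
          intro y hy
          simp only [Set.mem_setOf_eq] at hy
          apply hcond x y a ha
          calc f (x + a) + f x + g (y + a) + g y
              = (f (x + a) + f x) + (g (y + a) + g y) := by abel
            _ = b + b := by rw [hx, hy]
            _ = 0 := char2_add_self b
        rw [hgb, Set.ncard_empty]
        have := hf a ha b
        omega
    · have hcH : A + e₀ ∈ H := hmem A hAH
      set c : H := ⟨A + e₀, hcH⟩ with hc'
      have hAeq : A = ↑c + e₀ := by
        show A = (A + e₀) + e₀
        rw [add_assoc, char2_add_self e₀, add_zero]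
      rw [hAeq, key2 c b]
      have hsub : {z : H | g (z + c) + f z = b}.ncard ≤ 1 := by
        rw [Set.ncard_le_one (Set.toFinite _)]
        intro x hx x' hx'
        simp only [Set.mem_setOf_eq] at hx hx'
        by_contra hne
        have ha : x + x' ≠ 0 := fun h => hne (char2_eq_of_add_eq_zero h)
        apply hcond x' (x' + c) (x + x') ha
        have e1 : x' + (x + x') = x := by
          calc x' + (x + x') = x + (x' + x') := by abel
            _ = x := by rw [char2_add_self x', add_zero]
        have e2 : x' + c + (x + x') = x + c := by
          calc x' + c + (x + x') = x + c + (x' + x') := by abel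
            _ = x + c := by rw [char2_add_self x', add_zero]
        rw [e1, e2]
        calc f x + f x' + g (x + c) + g (x' + c)
            = (g (x + c) + f x) + (g (x' + c) + f x') := by abel
          _ = b + b := by rw [hx, hx']
          _ = 0 := char2_add_self b
      omega
end

section
/- The function G(x) = x³ + Tr(x)·L(x) on F_{2^n} (L linear) is APN if and only if for every nonzero a ∈ F_{2^n} with Tr(a) = 0, the equation x²a + a²x + L(a) = 0 has no solution x with Tr(x) = 1. -/
noncomputable def Tr (n : ℕ) : GaloisField 2 n → ZMod 2 :=
  Algebra.trace (ZMod 2) (GaloisField 2 n)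

namespace Stmt13Aux

variable {n : ℕ} (L : GaloisField 2 n →ₗ[ZMod 2] GaloisField 2 n)

local notation "F" => GaloisField 2 n

lemma two_eq_zero : (2 : F) = 0 := by
  exact_mod_cast CharP.cast_eq_zero (GaloisField 2 n) 2

lemma add_self (v : F) : v + v = 0 := by
  linear_combination v * (two_eq_zero (n := n))

lemma tr_add (x y : F) : Tr n (x + y) = Tr n x + Tr n y := by
  simp only [Tr]; exact map_add _ x y

lemma tr_zero : Tr n (0 : F) = 0 := by
  simp only [Tr]; exact map_zero _

lemma zmod2_cases (t : ZMod 2) : t = 0 ∨ t = 1 := by revert t; decide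

lemma one_add_one : (1 : ZMod 2) + 1 = 0 := by decide

/-- The linear part of the derivative of `G` in direction `a`. -/
noncomputable def phi (a x : F) : F :=
  x ^ 2 * a + x * a ^ 2 + Tr n x • L a + Tr n a • L x

lemma phi_add (a x y : F) : phi L a (x + y) = phi L a x + phi L a y := by
  have h2 := two_eq_zero (n := n)
  have hsq : (x + y) ^ 2 = x ^ 2 + y ^ 2 := by linear_combination (x * y) * h2
  simp only [phi, hsq, tr_add, add_smul, map_add, smul_add, add_mul]
  abel

lemma phi_zero (a : F) : phi L a 0 = 0 := by
  simp [phi, tr_zero]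

lemma phi_self (a : F) : phi L a a = 0 := by
  rcases zmod2_cases (Tr n a) with h | h <;>
    simp only [phi, h, zero_smul, one_smul, add_zero] <;>
    [linear_combination (a ^ 3) * (two_eq_zero (n := n));
     linear_combination (a ^ 3 + L a) * (two_eq_zero (n := n))]

end Stmt13Aux

open Stmt13Aux in
theorem stmt13 (n : ℕ)
    (L : GaloisField 2 n →ₗ[ZMod 2] GaloisField 2 n)
    (G : GaloisField 2 n → GaloisField 2 n)
    (hG : ∀ x, G x = x ^ 3 + Tr n x • L x) :
    IsAPN G ↔
      ∀ a : GaloisField 2 n, a ≠ 0 → Tr n a = 0 →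
        ∀ x : GaloisField 2 n, Tr n x = 1 →
          x ^ 2 * a + a ^ 2 * x + L a ≠ 0 := by
  have h2 : (2 : GaloisField 2 n) = 0 := two_eq_zero
  have hself : ∀ v : GaloisField 2 n, v + v = 0 := add_self
  -- the derivative formula
  have hD : ∀ a x : GaloisField 2 n, G (x + a) + G x = phi L a x + G a := by
    intro a x
    simp only [hG, phi, map_add]
    rcases zmod2_cases (Tr n a) with ha | ha <;>
      rcases zmod2_cases (Tr n x) with hx | hx <;>
      simp only [tr_add, ha, hx, one_add_one, add_zero, zero_add, zero_smul,
        one_smul, smul_add] <;>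
      [linear_combination (x ^ 3 + x ^ 2 * a + x * a ^ 2) * h2;
       linear_combination (x ^ 3 + x ^ 2 * a + x * a ^ 2 + L x) * h2;
       linear_combination (x ^ 3 + x ^ 2 * a + x * a ^ 2) * h2;
       linear_combination (x ^ 3 + x ^ 2 * a + x * a ^ 2 - L a) * h2]
  have hmem : ∀ a b x : GaloisField 2 n,
      (G (x + a) + G x = b) ↔ phi L a x = b + G a := by
    intro a b x
    rw [hD]
    constructor
    · intro h; linear_combination h - G a * h2
    · intro h; linear_combination h + G a * h2
  constructor
  · -- APN → condition
    intro hAPN a ha hTa x hTx heq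
    have hx0 : x ≠ 0 := by rintro rfl; rw [tr_zero] at hTx; exact one_ne_zero hTx.symm
    have hxa : x ≠ a := by rintro rfl; rw [hTa] at hTx; exact one_ne_zero hTx.symm
    have hφx : phi L a x = 0 := by
      simp only [phi, hTa, hTx, zero_smul, one_smul, add_zero]
      linear_combination heq
    have hφxa : phi L a (x + a) = 0 := by
      rw [phi_add, hφx, phi_self, add_zero]
    have hsub : ({0, a, x, x + a} : Set (GaloisField 2 n)) ⊆
        {z | G (z + a) + G z = G a} := by
      intro z hz
      simp only [Set.mem_insert_iff, Set.mem_singleton_iff] at hz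
      rw [Set.mem_setOf_eq, hmem]
      rcases hz with rfl | rfl | rfl | rfl
      · rw [phi_zero, hself]
      · rw [phi_self, hself]
      · rw [hφx, hself]
      · rw [hφxa, hself]
    have hxa0 : x + a ≠ 0 := by
      intro h; exact hxa (by linear_combination h - a * h2)
    have hxaa : x + a ≠ a := by
      intro h; exact hx0 (by linear_combination h)
    have hxax : x + a ≠ x := by
      intro h; exact ha (by linear_combination h)
    have hcard : ({0, a, x, x + a} : Set (GaloisField 2 n)).ncard = 4 := by
      rw [Set.ncard_insert_of_notMem (by simp [Ne.symm ha, Ne.symm hx0, Ne.symm hxa0]),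
        Set.ncard_insert_of_notMem (by simp [Ne.symm hxa, Ne.symm hxaa]),
        Set.ncard_insert_of_notMem (by simp [Ne.symm hxax]), Set.ncard_singleton]
    have hle2 := hAPN a ha (G a)
    have hle : (4 : ℕ) ≤ ({z : GaloisField 2 n | G (z + a) + G z = G a}).ncard := by
      rw [← hcard]
      exact Set.ncard_le_ncard hsub (Set.toFinite _)
    omega
  · -- condition → APN
    intro H
    have hker : ∀ a : GaloisField 2 n, a ≠ 0 →
        ∀ x : GaloisField 2 n, phi L a x = 0 → x = 0 ∨ x = a := by
      have key : ∀ a x : GaloisField 2 n, a ≠ 0 → Tr n a = 1 → Tr n x = 0 →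
          phi L a x = 0 → x = 0 := by
        intro a x ha hTa hTx hφ
        by_contra hx0
        refine H x hx0 hTx a hTa ?_
        simp only [phi, hTa, hTx, zero_smul, one_smul, add_zero, zero_add] at hφ
        linear_combination hφ
      intro a ha x hφ
      rcases zmod2_cases (Tr n a) with hTa | hTa
      · rcases zmod2_cases (Tr n x) with hTx | hTx
        · simp only [phi, hTa, hTx, zero_smul, add_zero] at hφ
          have hxx : x * a * (x + a) = 0 := by linear_combination hφ
          rcases mul_eq_zero.mp hxx with h | h
          · rcases mul_eq_zero.mp h with h | h
            · exact Or.inl h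
            · exact absurd h ha
          · exact Or.inr (by linear_combination h - a * h2)
        · exfalso
          refine H a ha hTa x hTx ?_
          simp only [phi, hTa, hTx, zero_smul, one_smul, add_zero] at hφ
          linear_combination hφ
      · rcases zmod2_cases (Tr n x) with hTx | hTx
        · exact Or.inl (key a x ha hTa hTx hφ)
        · have hTxa : Tr n (x + a) = 0 := by rw [tr_add, hTx, hTa]; decide
          have hφ' : phi L a (x + a) = 0 := by rw [phi_add, hφ, phi_self, add_zero]
          have hz := key a (x + a) ha hTa hTxa hφ'
          exact Or.inr (by linear_combination hz - a * h2)
    intro a ha b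
    rcases Set.eq_empty_or_nonempty {x : GaloisField 2 n | G (x + a) + G x = b} with
      hS | ⟨x0, hx0⟩
    · rw [hS]; simp
    · have hsub : {x : GaloisField 2 n | G (x + a) + G x = b} ⊆ {x0, x0 + a} := by
        intro y hy
        rw [Set.mem_setOf_eq, hmem] at hy hx0
        have hk : phi L a (y + x0) = 0 := by
          rw [phi_add, hy, hx0, hself]
        rw [Set.mem_insert_iff, Set.mem_singleton_iff]
        rcases hker a ha _ hk with h | h
        · left; linear_combination h - x0 * h2
        · right; linear_combination h - x0 * h2
      calc ({x : GaloisField 2 n | G (x + a) + G x = b}).ncard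
          ≤ ({x0, x0 + a} : Set (GaloisField 2 n)).ncard :=
            Set.ncard_le_ncard hsub (Set.toFinite _)
        _ ≤ 2 := by
            rw [Set.ncard_pair (fun h => ha (by linear_combination -h))]
end

section
/- Let G(x) = x³ + Tr(x)·L(x) on F_{2^n} with L linear. Then G is APN if and only if Σ_{x ∈ F_{2^n} \ {0,1}} (−1)^{Tr(x²L(x²+x)/(x²+x)³)} − (1/2)·Σ_{x ∈ F_{2^n} \ {0,1}} (−1)^{Tr(L(x²+x)/(x²+x)³)} = 2^{n−1} − 1. -/
set_option linter.unusedSectionVars false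

section Aux
variable {n : ℕ}

example : Algebra.IsSeparable (ZMod 2) (GaloisField 2 n) := inferInstance
example : CharP (GaloisField 2 n) 2 := inferInstance

lemma Tr_add (x y : GaloisField 2 n) : Tr n (x + y) = Tr n x + Tr n y := map_add _ x y
lemma Tr_zero : Tr n (0 : GaloisField 2 n) = 0 := map_zero _

lemma exists_Tr_one : ∃ t : GaloisField 2 n, Tr n t = 1 := by
  obtain ⟨t, ht⟩ := Algebra.trace_surjective (ZMod 2) (GaloisField 2 n) 1
  exact ⟨t, ht⟩

lemma Tr_sq (x : GaloisField 2 n) : Tr n (x ^ 2) = Tr n x := by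
  have hc : ∀ r : ZMod 2, frobeniusEquiv (GaloisField 2 n) 2 (algebraMap (ZMod 2) _ r)
      = algebraMap (ZMod 2) _ r := by
    intro r
    show (algebraMap (ZMod 2) (GaloisField 2 n) r) ^ 2 = algebraMap _ _ r
    rw [← map_pow]
    congr 1
    revert r; decide
  have := Algebra.trace_eq_of_algEquiv
    (AlgEquiv.ofRingEquiv (f := frobeniusEquiv (GaloisField 2 n) 2) hc) x
  exact this

lemma two_eq_zero : (2 : GaloisField 2 n) = 0 := by
  exact_mod_cast CharP.cast_eq_zero (GaloisField 2 n) 2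

lemma addself_s14 (x : GaloisField 2 n) : x + x = 0 := by
  linear_combination x * two_eq_zero

lemma sq_add (x y : GaloisField 2 n) : (x + y) ^ 2 = x ^ 2 + y ^ 2 := by
  linear_combination x * y * two_eq_zero

end Aux

section Count
variable {n : ℕ} [Fintype (GaloisField 2 n)] [DecidableEq (GaloisField 2 n)]
open Finset

lemma zmod2_cases (s : ZMod 2) : s = 0 ∨ s = 1 := by revert s; decide
lemma zmod2_addself (s : ZMod 2) : s + s = 0 := by revert s; decide

lemma sol_eq_pair {c y₀ : GaloisField 2 n} (h : y₀ ^ 2 + y₀ = c) :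
    (univ.filter (fun y : GaloisField 2 n => y ^ 2 + y = c)) = {y₀, y₀ + 1} := by
  ext y
  simp only [mem_filter, mem_univ, true_and, mem_insert, mem_singleton]
  constructor
  · intro hy
    have h2 : (y + y₀) * ((y + y₀) + 1) = 0 := by
      linear_combination hy + h + (y * y₀ + c) * two_eq_zero
    rcases mul_eq_zero.mp h2 with h4 | h4
    · left; linear_combination h4 - y₀ * two_eq_zero
    · right; linear_combination h4 - (y₀ + 1) * two_eq_zero
  · rintro (rfl | rfl)
    · exact h
    · linear_combination h + (y₀ + 1) * two_eq_zero

lemma pair_card (y₀ : GaloisField 2 n) : ({y₀, y₀ + 1} : Finset (GaloisField 2 n)).card = 2 := by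
  rw [card_pair]
  intro h
  have h1 : (1 : GaloisField 2 n) = 0 := by linear_combination -h
  exact one_ne_zero h1

lemma Tr_sol {c y : GaloisField 2 n} (h : y ^ 2 + y = c) : Tr n c = 0 := by
  rw [← h, Tr_add, Tr_sq]
  exact zmod2_addself (Tr n y)

lemma card_trace_zero :
    2 * (univ.filter (fun x : GaloisField 2 n => Tr n x = 0)).card
      = Fintype.card (GaloisField 2 n) := by
  obtain ⟨t, ht⟩ := exists_Tr_one (n := n)
  have hsplit := card_filter_add_card_filter_not
    (s := (univ : Finset (GaloisField 2 n))) (p := fun x => Tr n x = 0)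
  have hbij : (univ.filter (fun x : GaloisField 2 n => Tr n x = 0)).card
      = (univ.filter (fun x : GaloisField 2 n => ¬ Tr n x = 0)).card := by
    apply card_bij (fun x _ => x + t)
    · intro x hx
      simp only [mem_filter, mem_univ, true_and] at hx ⊢
      rw [Tr_add, hx, ht]; decide
    · intro x hx y hy hxy
      have := congrArg (fun z => z + t) hxy
      simpa [add_assoc, addself_s14 t] using this
    · intro y hy
      refine ⟨y + t, ?_, by rw [add_assoc, addself_s14 t, add_zero]⟩
      simp only [mem_filter, mem_univ, true_and] at hy ⊢
      rw [Tr_add, ht]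
      rcases zmod2_cases (Tr n y) with h | h
      · exact absurd h hy
      · rw [h]; decide
  rw [card_univ] at hsplit
  omega

lemma fiber_card_two {c : GaloisField 2 n}
    (hc : c ∈ univ.image (fun y : GaloisField 2 n => y ^ 2 + y)) :
    (univ.filter (fun y : GaloisField 2 n => y ^ 2 + y = c)).card = 2 := by
  obtain ⟨y₀, -, h⟩ := mem_image.mp hc
  rw [sol_eq_pair h, pair_card]

lemma image_eq_trace_zero :
    (univ.image (fun y : GaloisField 2 n => y ^ 2 + y))
      = univ.filter (fun x : GaloisField 2 n => Tr n x = 0) := by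
  have hsub : (univ.image (fun y : GaloisField 2 n => y ^ 2 + y))
      ⊆ univ.filter (fun x : GaloisField 2 n => Tr n x = 0) := by
    intro c hc
    obtain ⟨y₀, -, h⟩ := mem_image.mp hc
    simp only [mem_filter, mem_univ, true_and]
    exact Tr_sol h
  have himg : 2 * (univ.image (fun y : GaloisField 2 n => y ^ 2 + y)).card
      = Fintype.card (GaloisField 2 n) := by
    have h1 := card_eq_sum_card_image (fun y : GaloisField 2 n => y ^ 2 + y)
      (univ : Finset (GaloisField 2 n))
    rw [card_univ] at h1
    rw [h1, Finset.sum_congr rfl (fun c hc => fiber_card_two hc), Finset.sum_const,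
      smul_eq_mul, mul_comm]
  have hcard := card_trace_zero (n := n)
  exact eq_of_subset_of_card_le hsub (by omega)

lemma card_sol (c : GaloisField 2 n) :
    (univ.filter (fun y : GaloisField 2 n => y ^ 2 + y = c)).card
      = if Tr n c = 0 then 2 else 0 := by
  by_cases hc : Tr n c = 0
  · rw [if_pos hc]
    apply fiber_card_two
    rw [image_eq_trace_zero]
    simp only [mem_filter, mem_univ, true_and]
    exact hc
  · rw [if_neg hc, card_eq_zero, filter_eq_empty_iff]
    intro y _
    exact fun h => hc (Tr_sol h)

lemma exists_sol {c : GaloisField 2 n} (hc : Tr n c = 0) :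
    ∃ y : GaloisField 2 n, y ^ 2 + y = c := by
  have := card_sol c
  rw [if_pos hc] at this
  obtain ⟨y, hy⟩ := card_pos.mp (by omega : 0 < (univ.filter
    (fun y : GaloisField 2 n => y ^ 2 + y = c)).card)
  exact ⟨y, (mem_filter.mp hy).2⟩

end Count

section Lam
open Finset
variable {n : ℕ} [Fintype (GaloisField 2 n)] [DecidableEq (GaloisField 2 n)]

noncomputable def Lam (n : ℕ) (L : GaloisField 2 n →ₗ[ZMod 2] GaloisField 2 n)
    (a x : GaloisField 2 n) : GaloisField 2 n :=
  a * x ^ 2 + a ^ 2 * x + Tr n x • L a + Tr n a • L x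

def Pprop (n : ℕ) (L : GaloisField 2 n →ₗ[ZMod 2] GaloisField 2 n) : Prop :=
  ∃ a y : GaloisField 2 n, a ≠ 0 ∧ Tr n a = 0 ∧ y ^ 2 + y = L a / a ^ 3 ∧ Tr n (a * y) = 1

variable {L : GaloisField 2 n →ₗ[ZMod 2] GaloisField 2 n}
variable {G : GaloisField 2 n → GaloisField 2 n}

lemma G_diff (hG : ∀ x, G x = x ^ 3 + Tr n x • L x) (a x : GaloisField 2 n) :
    G (x + a) + G x = Lam n L a x + G a := by
  rw [hG, hG, hG]
  unfold Lam
  rw [Tr_add, map_add]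
  rcases zmod2_cases (Tr n x) with hs | hs <;> rcases zmod2_cases (Tr n a) with ht | ht <;>
      rw [hs, ht]
  · simp only [add_zero, zero_smul]
    linear_combination (x ^ 3 + a * x ^ 2 + a ^ 2 * x) * two_eq_zero
  · simp only [zero_add, one_smul, zero_smul, smul_add]
    linear_combination (x ^ 3 + a * x ^ 2 + a ^ 2 * x) * two_eq_zero
  · simp only [add_zero, one_smul, zero_smul, smul_add]
    linear_combination (x ^ 3 + a * x ^ 2 + a ^ 2 * x + L x) * two_eq_zero
  · rw [(by decide : (1 : ZMod 2) + 1 = 0)]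
    simp only [zero_smul, one_smul, add_zero, zero_add]
    linear_combination (x ^ 3 + a * x ^ 2 + a ^ 2 * x - L a) * two_eq_zero

lemma Lam_add (a x z : GaloisField 2 n) :
    Lam n L a (x + z) = Lam n L a x + Lam n L a z := by
  unfold Lam
  rw [Tr_add, map_add, smul_add, sq_add]
  rcases zmod2_cases (Tr n x) with hs | hs <;> rcases zmod2_cases (Tr n z) with ht | ht <;>
      rw [hs, ht]
  · simp only [add_zero, zero_smul]; ring
  · simp only [zero_add, one_smul, zero_smul]; ring
  · simp only [add_zero, one_smul, zero_smul]; ring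
  · rw [(by decide : (1 : ZMod 2) + 1 = 0)]
    simp only [zero_smul, one_smul]
    generalize Tr n a • L x = u
    generalize Tr n a • L z = v
    linear_combination - (L a) * two_eq_zero

lemma Lam_zero (a : GaloisField 2 n) : Lam n L a 0 = 0 := by
  unfold Lam
  rw [Tr_zero, map_zero, zero_smul, smul_zero]
  ring

lemma Lam_self (a : GaloisField 2 n) : Lam n L a a = 0 := by
  unfold Lam
  rcases zmod2_cases (Tr n a) with ht | ht <;> rw [ht]
  · simp only [zero_smul]
    linear_combination a ^ 3 * two_eq_zero
  · simp only [one_smul]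
    linear_combination (a ^ 3 + L a) * two_eq_zero

lemma kernel_to_P {a z : GaloisField 2 n} (ha : a ≠ 0) (hz0 : z ≠ 0) (hza : z ≠ a)
    (hker : Lam n L a z = 0) : Pprop n L := by
  unfold Lam at hker
  rcases zmod2_cases (Tr n a) with hta | hta <;> rcases zmod2_cases (Tr n z) with htz | htz <;>
      rw [hta, htz] at hker
  · -- Tr a = 0, Tr z = 0 : contradiction
    exfalso
    simp only [zero_smul, add_zero] at hker
    have : z * (z + a) = 0 := by
      have h2 : a * (z * (z + a)) = 0 := by linear_combination hker
      rcases mul_eq_zero.mp h2 with h | h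
      · exact absurd h ha
      · exact h
    rcases mul_eq_zero.mp this with h | h
    · exact hz0 h
    · exact hza (by linear_combination h - a * two_eq_zero)
  · -- Tr a = 0, Tr z = 1 : witness (a, z/a)
    simp only [zero_smul, one_smul, add_zero] at hker
    refine ⟨a, z / a, ha, hta, ?_, ?_⟩
    · field_simp
      linear_combination hker - L a * two_eq_zero
    · rw [mul_div_cancel₀ z ha]  -- a * (z / a) = z ?
      exact htz
  · -- Tr a = 1, Tr z = 0 : witness (z, a/z)
    simp only [zero_smul, one_smul, add_zero] at hker
    refine ⟨z, a / z, hz0, htz, ?_, ?_⟩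
    · field_simp
      linear_combination hker - L z * two_eq_zero
    · rw [mul_div_cancel₀ a hz0]
      exact hta
  · -- Tr a = 1, Tr z = 1 : witness (z + a, a/(z+a))
    simp only [one_smul] at hker
    have hw : z + a ≠ 0 := fun h => hza (by linear_combination h - a * two_eq_zero)
    refine ⟨z + a, a / (z + a), hw, ?_, ?_, ?_⟩
    · rw [Tr_add, hta, htz]; decide
    · rw [map_add]
      field_simp
      linear_combination hker + (a ^ 2 * z + a ^ 3 - L a - L z) * two_eq_zero
    · rw [mul_div_cancel₀ a hw]
      exact hta

lemma P_to_kernel (hP : Pprop n L) :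
    ∃ a z : GaloisField 2 n, a ≠ 0 ∧ z ≠ 0 ∧ z ≠ a ∧ Lam n L a z = 0 := by
  obtain ⟨a, y, ha, hta, hy, htay⟩ := hP
  refine ⟨a, a * y, ha, ?_, ?_, ?_⟩
  · intro h
    rw [h, Tr_zero] at htay
    exact absurd htay (by decide)
  · intro h
    rw [h, hta] at htay
    exact absurd htay (by decide)
  · unfold Lam
    rw [hta, htay, zero_smul, one_smul, add_zero]
    have h3 : a ^ 3 ≠ 0 := pow_ne_zero 3 ha
    have hy' : a ^ 3 * (y ^ 2 + y) = L a := by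
      rw [hy, mul_div_cancel₀ _ h3]
    linear_combination hy' + L a * two_eq_zero

lemma APN_iff_notP (hG : ∀ x, G x = x ^ 3 + Tr n x • L x) : IsAPN G ↔ ¬ Pprop n L := by
  constructor
  · intro hAPN hP
    obtain ⟨a, z, ha, hz0, hza, hker⟩ := P_to_kernel hP
    have hsub : ({0, a, z} : Set (GaloisField 2 n)) ⊆ {x | G (x + a) + G x = G a} := by
      rintro x (rfl | rfl | rfl) <;> simp only [Set.mem_setOf_eq, G_diff hG]
      · rw [Lam_zero, zero_add]
      · rw [Lam_self, zero_add]
      · rw [hker, zero_add]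
    have h3 : ({0, a, z} : Set (GaloisField 2 n)).ncard = 3 := by
      rw [Set.ncard_insert_of_notMem (by simp [Ne.symm ha, Ne.symm hz0]) (Set.toFinite _),
        Set.ncard_pair (Ne.symm hza)]
    have := Set.ncard_le_ncard hsub (Set.toFinite _)
    have := hAPN a ha (G a)
    omega
  · intro hnP a ha b
    by_cases hne : ({x : GaloisField 2 n | G (x + a) + G x = b}).Nonempty
    · obtain ⟨x₀, hx₀⟩ := hne
      have hsub : {x : GaloisField 2 n | G (x + a) + G x = b} ⊆ {x₀, x₀ + a} := by
        intro x hx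
        simp only [Set.mem_setOf_eq, G_diff hG] at hx hx₀
        have hlam : Lam n L a (x + x₀) = 0 := by
          rw [Lam_add]
          have : Lam n L a x = Lam n L a x₀ := by
            have := hx.trans hx₀.symm
            exact add_right_cancel this
          rw [this, addself_s14]
        by_contra hmem
        simp only [Set.mem_insert_iff, Set.mem_singleton_iff] at hmem
        push_neg at hmem
        apply hnP
        apply kernel_to_P ha (z := x + x₀) ?_ ?_ hlam
        · intro h
          exact hmem.1 (by linear_combination h - x₀ * two_eq_zero)
        · intro h
          exact hmem.2 (by linear_combination h - x₀ * two_eq_zero)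
      calc ({x : GaloisField 2 n | G (x + a) + G x = b}).ncard
          ≤ ({x₀, x₀ + a} : Set (GaloisField 2 n)).ncard :=
            Set.ncard_le_ncard hsub (Set.toFinite _)
        _ ≤ 2 := by
            apply le_trans (Set.ncard_insert_le _ _)
            simp
    · rw [Set.not_nonempty_iff_eq_empty.mp hne, Set.ncard_empty]
      omega

end Lam

section Sums
open Finset
variable {n : ℕ} [Fintype (GaloisField 2 n)] [DecidableEq (GaloisField 2 n)]
variable {L : GaloisField 2 n →ₗ[ZMod 2] GaloisField 2 n}

/-- number of `y` with `y^2+y = L u / u^3` and `Tr (u*y) = 1`. -/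
noncomputable def Cnt (n : ℕ) [Fintype (GaloisField 2 n)] [DecidableEq (GaloisField 2 n)]
    (L : GaloisField 2 n →ₗ[ZMod 2] GaloisField 2 n) (u : GaloisField 2 n) : ℕ :=
  (univ.filter (fun y : GaloisField 2 n => y ^ 2 + y = L u / u ^ 3 ∧ Tr n (u * y) = 1)).card

lemma P_iff_cnt : Pprop n L ↔ ∃ u ∈ univ.filter
    (fun u : GaloisField 2 n => u ≠ 0 ∧ Tr n u = 0), Cnt n L u ≠ 0 := by
  constructor
  · rintro ⟨a, y, ha, hta, hy, htay⟩
    refine ⟨a, by simp [ha, hta], ?_⟩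
    apply card_ne_zero_of_mem (a := y)
    simp only [mem_filter, mem_univ, true_and]
    exact ⟨hy, htay⟩
  · rintro ⟨u, hu, hcnt⟩
    simp only [mem_filter, mem_univ, true_and] at hu
    obtain ⟨y, hy⟩ := card_pos.mp (Nat.pos_of_ne_zero hcnt)
    simp only [mem_filter, mem_univ, true_and] at hy
    exact ⟨u, y, hu.1, hu.2, hy.1, hy.2⟩

lemma notP_iff_sum_cnt : ¬ Pprop n L ↔
    (∑ u ∈ univ.filter (fun u : GaloisField 2 n => u ≠ 0 ∧ Tr n u = 0), Cnt n L u) = 0 := by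
  rw [Finset.sum_eq_zero_iff, P_iff_cnt]
  push_neg
  simp

lemma per_u {u x₀ : GaloisField 2 n} (hu0 : u ≠ 0) (htu : Tr n u = 0)
    (hx₀ : x₀ ^ 2 + x₀ = u) :
    (((-1 : ℚ) ^ (Tr n (x₀ ^ 2 * L u / u ^ 3)).val
        + (-1 : ℚ) ^ (Tr n ((x₀ + 1) ^ 2 * L u / u ^ 3)).val))
      - (1 / 2) * ((-1 : ℚ) ^ (Tr n (L u / u ^ 3)).val
        + (-1 : ℚ) ^ (Tr n (L u / u ^ 3)).val)
      = 1 - 2 * (Cnt n L u : ℚ) := by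
  set c : GaloisField 2 n := L u / u ^ 3 with hc
  have hc1 : x₀ ^ 2 * L u / u ^ 3 = x₀ ^ 2 * c := by rw [hc, mul_div_assoc]
  have hc2 : (x₀ + 1) ^ 2 * L u / u ^ 3 = (x₀ + 1) ^ 2 * c := by rw [hc, mul_div_assoc]
  have hsplit : Tr n ((x₀ + 1) ^ 2 * c) = Tr n (x₀ ^ 2 * c) + Tr n c := by
    have h1 : (x₀ + 1) ^ 2 * c = x₀ ^ 2 * c + c := by
      rw [sq_add, one_pow]; ring
    rw [h1, Tr_add]
  rcases zmod2_cases (Tr n c) with htc | htc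
  · -- Tr c = 0 : two roots
    obtain ⟨y₀, hy₀⟩ := exists_sol htc
    have key : Tr n (x₀ ^ 2 * c) = Tr n (u * y₀) := by
      have e1 : x₀ ^ 2 * c = (x₀ * y₀) ^ 2 + x₀ ^ 2 * y₀ := by rw [← hy₀]; ring
      have e2 : x₀ * y₀ + x₀ ^ 2 * y₀ = u * y₀ := by rw [← hx₀]; ring
      rw [e1, Tr_add, Tr_sq, ← Tr_add, e2]
    have htuy1 : Tr n (u * (y₀ + 1)) = Tr n (u * y₀) := by
      rw [mul_add, mul_one, Tr_add, htu, add_zero]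
    have hcnt : Cnt n L u = if Tr n (u * y₀) = 1 then 2 else 0 := by
      unfold Cnt
      rw [← hc, ← filter_filter, sol_eq_pair hy₀]
      rcases zmod2_cases (Tr n (u * y₀)) with h | h
      · rw [if_neg (by rw [h]; decide)]
        rw [card_eq_zero, filter_eq_empty_iff]
        intro y hy
        rcases mem_insert.mp hy with rfl | hy'
        · rw [h]; decide
        · rw [mem_singleton.mp hy', htuy1, h]; decide
      · rw [if_pos h, filter_true_of_mem, pair_card]
        intro y hy
        rcases mem_insert.mp hy with rfl | hy'
        · exact h
        · rw [mem_singleton.mp hy', htuy1]; exact h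
    rw [hc1, hc2, hsplit, htc, add_zero, key, hcnt]
    rcases zmod2_cases (Tr n (u * y₀)) with h | h <;> rw [h] <;> norm_num [show ((1:ZMod 2)).val = 1 from rfl, show ((0:ZMod 2)).val = 0 from rfl, show ((2:ZMod 2)).val = 0 from by decide, show ((1:ZMod 2)+1) = 0 from by decide]
  · -- Tr c = 1 : no roots
    have hcnt : Cnt n L u = 0 := by
      unfold Cnt
      rw [← hc, card_eq_zero, filter_eq_empty_iff]
      rintro y - ⟨h1, -⟩
      rw [Tr_sol h1] at htc
      exact absurd htc (by decide)
    rw [hc1, hc2, hsplit, htc, hcnt]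
    rcases zmod2_cases (Tr n (x₀ ^ 2 * c)) with h | h <;> rw [h] <;> norm_num [show ((1:ZMod 2)).val = 1 from rfl, show ((0:ZMod 2)).val = 0 from rfl, show ((2:ZMod 2)).val = 0 from by decide, show ((1:ZMod 2)+1) = 0 from by decide]

lemma maps_to_U {x : GaloisField 2 n} (hx : x ∈ univ.filter
    (fun x : GaloisField 2 n => x ≠ 0 ∧ x ≠ 1)) :
    x ^ 2 + x ∈ univ.filter (fun u : GaloisField 2 n => u ≠ 0 ∧ Tr n u = 0) := by
  simp only [mem_filter, mem_univ, true_and] at hx ⊢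
  constructor
  · intro h
    have : x * (x + 1) = 0 := by linear_combination h
    rcases mul_eq_zero.mp this with h' | h'
    · exact hx.1 h'
    · exact hx.2 (by linear_combination h' - two_eq_zero)
  · rw [Tr_add, Tr_sq]
    exact zmod2_addself (Tr n x)

lemma fiber_eq {u : GaloisField 2 n} (hu0 : u ≠ 0) :
    ((univ.filter (fun x : GaloisField 2 n => x ≠ 0 ∧ x ≠ 1)).filter
        (fun x => x ^ 2 + x = u))
      = univ.filter (fun x : GaloisField 2 n => x ^ 2 + x = u) := by
  ext x
  simp only [mem_filter, mem_univ, true_and, and_iff_right_iff_imp]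
  intro hx
  constructor
  · rintro rfl
    exact hu0 (by linear_combination -hx)
  · rintro rfl
    exact hu0 (by linear_combination - hx + two_eq_zero)

lemma sum_identity (hn : n ≠ 0) :
    (∑ x ∈ Finset.univ.filter (fun x : GaloisField 2 n => x ≠ 0 ∧ x ≠ 1),
        ((-1 : ℚ) ^ (Tr n (x ^ 2 * L (x ^ 2 + x) / (x ^ 2 + x) ^ 3)).val))
      - (1 / 2) * (∑ x ∈ Finset.univ.filter (fun x : GaloisField 2 n => x ≠ 0 ∧ x ≠ 1),
        ((-1 : ℚ) ^ (Tr n (L (x ^ 2 + x) / (x ^ 2 + x) ^ 3)).val))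
      = (2 ^ (n - 1) - 1 : ℚ)
        - 2 * (∑ u ∈ univ.filter (fun u : GaloisField 2 n => u ≠ 0 ∧ Tr n u = 0),
            (Cnt n L u : ℚ)) := by
  have hmaps : ∀ x ∈ univ.filter (fun x : GaloisField 2 n => x ≠ 0 ∧ x ≠ 1),
      (fun x : GaloisField 2 n => x ^ 2 + x) x
        ∈ univ.filter (fun u : GaloisField 2 n => u ≠ 0 ∧ Tr n u = 0) :=
    fun x hx => maps_to_U hx
  rw [← Finset.sum_fiberwise_of_maps_to hmaps
      (fun x : GaloisField 2 n =>
        ((-1 : ℚ) ^ (Tr n (x ^ 2 * L (x ^ 2 + x) / (x ^ 2 + x) ^ 3)).val)),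
    ← Finset.sum_fiberwise_of_maps_to hmaps
      (fun x : GaloisField 2 n =>
        ((-1 : ℚ) ^ (Tr n (L (x ^ 2 + x) / (x ^ 2 + x) ^ 3)).val)),
    Finset.mul_sum, ← Finset.sum_sub_distrib]
  have hcardU : (univ.filter (fun u : GaloisField 2 n => u ≠ 0 ∧ Tr n u = 0)).card
      = 2 ^ (n - 1) - 1 := by
    have hK : univ.filter (fun u : GaloisField 2 n => u ≠ 0 ∧ Tr n u = 0)
        = (univ.filter (fun u : GaloisField 2 n => Tr n u = 0)).erase 0 := by
      ext u
      simp only [mem_filter, mem_univ, true_and, mem_erase]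
    have h0 : (0 : GaloisField 2 n) ∈ univ.filter (fun u : GaloisField 2 n => Tr n u = 0) := by
      simp only [mem_filter, mem_univ, true_and]
      exact Tr_zero
    have hcard2 := card_trace_zero (n := n)
    have hcardF : Fintype.card (GaloisField 2 n) = 2 ^ n := by
      rw [← Nat.card_eq_fintype_card, GaloisField.card 2 n hn]
    rw [hK, card_erase_of_mem h0]
    rw [hcardF] at hcard2
    have h2n : 2 ^ n = 2 * 2 ^ (n - 1) := by
      conv_lhs => rw [show n = 1 + (n - 1) by omega]
      rw [pow_add, pow_one]
    omega
  have hpt : ∀ u ∈ univ.filter (fun u : GaloisField 2 n => u ≠ 0 ∧ Tr n u = 0),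
      ((∑ x ∈ (univ.filter (fun x : GaloisField 2 n => x ≠ 0 ∧ x ≠ 1)).filter
            (fun x => x ^ 2 + x = u),
          ((-1 : ℚ) ^ (Tr n (x ^ 2 * L (x ^ 2 + x) / (x ^ 2 + x) ^ 3)).val))
        - (1 / 2) * (∑ x ∈ (univ.filter (fun x : GaloisField 2 n => x ≠ 0 ∧ x ≠ 1)).filter
            (fun x => x ^ 2 + x = u),
          ((-1 : ℚ) ^ (Tr n (L (x ^ 2 + x) / (x ^ 2 + x) ^ 3)).val)))
      = 1 - 2 * (Cnt n L u : ℚ) := by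
    intro u hu
    simp only [mem_filter, mem_univ, true_and] at hu
    obtain ⟨hu0, htu⟩ := hu
    obtain ⟨x₀, hx₀⟩ := exists_sol htu
    have hx₁ : (x₀ + 1) ^ 2 + (x₀ + 1) = u := by linear_combination hx₀ + (x₀ + 1) * two_eq_zero
    have hne : x₀ ≠ x₀ + 1 := by
      intro h
      have h1 : (1 : GaloisField 2 n) = 0 := by linear_combination -h
      exact one_ne_zero h1
    rw [fiber_eq hu0, sol_eq_pair hx₀, Finset.sum_pair hne, Finset.sum_pair hne,
      hx₀, hx₁]
    exact per_u hu0 htu hx₀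
  rw [Finset.sum_congr rfl hpt, Finset.sum_sub_distrib, Finset.sum_const, nsmul_eq_mul, hcardU,
    ← Finset.mul_sum]
  have h1 : (1 : ℕ) ≤ 2 ^ (n - 1) := Nat.one_le_two_pow
  rw [Nat.cast_sub h1]
  push_cast
  ring

end Sums

theorem stmt14 (n : ℕ) (hn : 0 < n)
    [Fintype (GaloisField 2 n)] [DecidableEq (GaloisField 2 n)]
    (L : GaloisField 2 n →ₗ[ZMod 2] GaloisField 2 n)
    (G : GaloisField 2 n → GaloisField 2 n)
    (hG : ∀ x, G x = x ^ 3 + Tr n x • L x) :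
    IsAPN G ↔
      (∑ x ∈ Finset.univ.filter (fun x : GaloisField 2 n => x ≠ 0 ∧ x ≠ 1),
          ((-1 : ℚ) ^ (Tr n (x ^ 2 * L (x ^ 2 + x) / (x ^ 2 + x) ^ 3)).val))
        - (1 / 2) * (∑ x ∈ Finset.univ.filter (fun x : GaloisField 2 n => x ≠ 0 ∧ x ≠ 1),
          ((-1 : ℚ) ^ (Tr n (L (x ^ 2 + x) / (x ^ 2 + x) ^ 3)).val))
        = 2 ^ (n - 1) - 1 := by
  rw [APN_iff_notP hG, notP_iff_sum_cnt, sum_identity (L := L) hn.ne']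
  constructor
  · intro h
    have h2 : (∑ u ∈ Finset.univ.filter
        (fun u : GaloisField 2 n => u ≠ 0 ∧ Tr n u = 0), (Cnt n L u : ℚ)) = 0 := by
      rw [← Nat.cast_sum, h, Nat.cast_zero]
    rw [h2]
    ring
  · intro h
    have h2 : (∑ u ∈ Finset.univ.filter
        (fun u : GaloisField 2 n => u ≠ 0 ∧ Tr n u = 0), (Cnt n L u : ℚ)) = 0 := by
      linarith
    rw [← Nat.cast_sum] at h2
    exact_mod_cast h2
end

section
/- Let F : F_2^n → F_2^n be APN, U an (n−2)-dimensional subspace with cosets U₁ = U, U₂, U₃, U₄ partitioning F_2^n, and a₁, a₂, a₃, a₄ ∈ F_2^n. Define G by G(x) = F(x) + a_i for x ∈ U_i. Then G is APN if and only if F(x₁)+F(x₂)+F(x₃)+F(x₄) ≠ a₁+a₂+a₃+a₄ for every 2-dimensional affine subspace {x₁,x₂,x₃,x₄} of F_2^n meeting each coset U_i in exactly one point. -/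
private lemma add_self' {n : ℕ} (v : Fin n → ZMod 2) : v + v = 0 := by
  funext i
  simpa using (by decide : ∀ a : ZMod 2, a + a = 0) (v i)

private lemma apn_iff_flat {n : ℕ} (f : (Fin n → ZMod 2) → (Fin n → ZMod 2)) :
    IsAPN f ↔ ∀ x₁ x₂ x₃ x₄ : Fin n → ZMod 2,
      x₁ ≠ x₂ → x₁ ≠ x₃ → x₁ ≠ x₄ → x₂ ≠ x₃ → x₂ ≠ x₄ → x₃ ≠ x₄ →
      x₁ + x₂ + x₃ + x₄ = 0 → f x₁ + f x₂ + f x₃ + f x₄ ≠ 0 := by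
  constructor
  · intro hf x1 x2 x3 x4 h12 h13 h14 h23 h24 h34 hsum hval
    have ha0 : x1 + x2 ≠ 0 := by
      intro h
      exact h12 (by linear_combination h - add_self' x2)
    have m1 : f (x1 + (x1 + x2)) + f x1 = f x1 + f x2 := by
      rw [show x1 + (x1 + x2) = x2 by linear_combination add_self' x1]; ring
    have m2 : f (x2 + (x1 + x2)) + f x2 = f x1 + f x2 := by
      rw [show x2 + (x1 + x2) = x1 by linear_combination add_self' x2]
    have m3 : f (x3 + (x1 + x2)) + f x3 = f x1 + f x2 := by
      rw [show x3 + (x1 + x2) = x4 by linear_combination hsum - add_self' x4]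
      linear_combination hval - add_self' (f x1) - add_self' (f x2)
    have m4 : f (x4 + (x1 + x2)) + f x4 = f x1 + f x2 := by
      rw [show x4 + (x1 + x2) = x3 by linear_combination hsum - add_self' x3]
      linear_combination hval - add_self' (f x1) - add_self' (f x2)
    have hsub : ({x1, x2, x3, x4} : Set _) ⊆
        {x | f (x + (x1 + x2)) + f x = f x1 + f x2} := by
      rw [Set.insert_subset_iff, Set.insert_subset_iff, Set.insert_subset_iff,
        Set.singleton_subset_iff]
      exact ⟨m1, m2, m3, m4⟩
    have h4 : ({x1, x2, x3, x4} : Set _).ncard = 4 := by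
      rw [Set.ncard_insert_of_notMem (by simp [h12, h13, h14]),
          Set.ncard_insert_of_notMem (by simp [h23, h24]),
          Set.ncard_insert_of_notMem (by simp [h34]), Set.ncard_singleton]
    have hle := Set.ncard_le_ncard hsub (Set.toFinite _)
    have := hf (x1 + x2) ha0 (f x1 + f x2)
    omega
  · intro h a ha b
    by_contra hcon
    push_neg at hcon
    have hS : {x | f (x + a) + f x = b}.Nonempty := by
      apply Set.nonempty_of_ncard_ne_zero; omega
    obtain ⟨x, hx⟩ := hS
    have hlt : ({x, x + a} : Set _).ncard < {x | f (x + a) + f x = b}.ncard := by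
      have h2 : ({x, x + a} : Set _).ncard ≤ 2 := by
        refine le_trans (Set.ncard_insert_le _ _) ?_
        simp [Set.ncard_singleton]
      omega
    obtain ⟨w, hw, hwx⟩ := Set.exists_mem_notMem_of_ncard_lt_ncard hlt
    simp only [Set.mem_insert_iff, Set.mem_singleton_iff, not_or] at hwx
    obtain ⟨hwx1, hwx2⟩ := hwx
    simp only [Set.mem_setOf_eq] at hx hw
    refine h x (x + a) w (w + a) ?_ (Ne.symm hwx1) ?_ (Ne.symm hwx2) ?_ ?_ ?_ ?_
    · intro hh; exact ha (by linear_combination -hh)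
    · intro hh; apply hwx2; linear_combination -hh - add_self' a
    · intro hh; apply hwx1; linear_combination -hh
    · intro hh; exact ha (by linear_combination -hh)
    · linear_combination add_self' x + add_self' w + add_self' a
    · linear_combination hx + hw + add_self' b

private lemma asum {n : ℕ} (a : Fin 4 → Fin n → ZMod 2) (d1 d2 d3 d4 : Fin 4)
    (h12 : d1 ≠ d2) (h13 : d1 ≠ d3) (h14 : d1 ≠ d4)
    (h23 : d2 ≠ d3) (h24 : d2 ≠ d4) (h34 : d3 ≠ d4) :
    a d1 + a d2 + a d3 + a d4 = a 0 + a 1 + a 2 + a 3 := by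
  have hs : ({d1, d2, d3, d4} : Finset (Fin 4)) = Finset.univ := by
    apply Finset.eq_univ_of_card
    rw [Finset.card_insert_of_notMem (by simp [h12, h13, h14]),
        Finset.card_insert_of_notMem (by simp [h23, h24]),
        Finset.card_insert_of_notMem (by simp [h34]), Finset.card_singleton]
    simp
  have hsum := Finset.sum_congr hs (fun _ _ => rfl) (f := a)
  rw [Finset.sum_insert (by simp [h12, h13, h14]), Finset.sum_insert (by simp [h23, h24]),
      Finset.sum_insert (by simp [h34]), Finset.sum_singleton, Fin.sum_univ_four] at hsum
  linear_combination hsum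

theorem stmt16 (n : ℕ)
    (F : (Fin n → ZMod 2) → (Fin n → ZMod 2)) (hF : IsAPN F)
    (U : Submodule (ZMod 2) (Fin n → ZMod 2))
    (hU : Module.finrank (ZMod 2) U = n - 2)
    (u : Fin 4 → (Fin n → ZMod 2)) (hu0 : u 0 = 0)
    -- the four cosets `U_i = U + u_i` partition `F_2^n`
    (hpart : ∀ x : Fin n → ZMod 2, ∃! i : Fin 4, x + u i ∈ U)
    (a : Fin 4 → (Fin n → ZMod 2))
    (G : (Fin n → ZMod 2) → (Fin n → ZMod 2))
    (hG : ∀ (i : Fin 4) (x : Fin n → ZMod 2), x + u i ∈ U → G x = F x + a i) :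
    IsAPN G ↔
      ∀ x₁ x₂ x₃ x₄ : Fin n → ZMod 2,
        x₁ ≠ x₂ → x₁ ≠ x₃ → x₁ ≠ x₄ → x₂ ≠ x₃ → x₂ ≠ x₄ → x₃ ≠ x₄ →
        x₁ + x₂ + x₃ + x₄ = 0 →
        (∀ i : Fin 4,
          ({x₁, x₂, x₃, x₄} ∩ {x : Fin n → ZMod 2 | x + u i ∈ U}).ncard = 1) →
        F x₁ + F x₂ + F x₃ + F x₄ ≠ a 0 + a 1 + a 2 + a 3 := by
  rw [apn_iff_flat]
  choose c hc hcu using hpart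
  have hsame : ∀ x y : Fin n → ZMod 2, x + y ∈ U → c x = c y := by
    intro x y hxy
    refine (hcu x (c y) ?_).symm
    have hm := U.add_mem hxy (hc y)
    have e : (x + y) + (y + u (c y)) = x + u (c y) := by
      linear_combination add_self' y
    rwa [e] at hm
  have hsame' : ∀ x y : Fin n → ZMod 2, c x = c y → x + y ∈ U := by
    intro x y hxy
    have hm := U.add_mem (hc x) (hc y)
    have e : (x + u (c x)) + (y + u (c y)) = x + y := by
      rw [hxy]; linear_combination add_self' (u (c y))
    rwa [e] at hm
  have hGx : ∀ x, G x = F x + a (c x) := fun x => hG (c x) x (hc x)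
  constructor
  · intro hGf x1 x2 x3 x4 h12 h13 h14 h23 h24 h34 hsum hmeet hFv
    have cinj : ∀ y z : Fin n → ZMod 2, y ∈ ({x1, x2, x3, x4} : Set _) →
        z ∈ ({x1, x2, x3, x4} : Set _) → y ≠ z → c y ≠ c z := by
      intro y z hy hz hyz hcyz
      have h1 := hmeet (c y)
      rw [Set.ncard_eq_one] at h1
      obtain ⟨p, hp⟩ := h1
      have hyp : y ∈ ({x1, x2, x3, x4} : Set _) ∩ {x | x + u (c y) ∈ U} := ⟨hy, hc y⟩
      have hzp : z ∈ ({x1, x2, x3, x4} : Set _) ∩ {x | x + u (c y) ∈ U} :=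
        ⟨hz, by simp only [Set.mem_setOf_eq, hcyz]; exact hc z⟩
      rw [hp] at hyp hzp
      exact hyz (hyp.trans hzp.symm)
    have hA : a (c x1) + a (c x2) + a (c x3) + a (c x4) = a 0 + a 1 + a 2 + a 3 :=
      asum a _ _ _ _
        (cinj _ _ (by simp) (by simp) h12) (cinj _ _ (by simp) (by simp) h13)
        (cinj _ _ (by simp) (by simp) h14) (cinj _ _ (by simp) (by simp) h23)
        (cinj _ _ (by simp) (by simp) h24) (cinj _ _ (by simp) (by simp) h34)
    apply hGf x1 x2 x3 x4 h12 h13 h14 h23 h24 h34 hsum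
    rw [hGx x1, hGx x2, hGx x3, hGx x4]
    linear_combination hFv + hA + add_self' (a 0 + a 1 + a 2 + a 3)
  · intro hmain y1 y2 y3 y4 h12 h13 h14 h23 h24 h34 hsum hGv
    rw [hGx y1, hGx y2, hGx y3, hGx y4] at hGv
    by_cases hc12 : c y1 = c y2
    · have hc34 : c y3 = c y4 := by
        apply hsame
        rw [show y3 + y4 = y1 + y2 by linear_combination hsum - add_self' y1 - add_self' y2]
        exact hsame' _ _ hc12
      apply (apn_iff_flat F).mp hF y1 y2 y3 y4 h12 h13 h14 h23 h24 h34 hsum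
      rw [← hc12, ← hc34] at hGv
      linear_combination hGv - add_self' (a (c y1)) - add_self' (a (c y3))
    by_cases hc13 : c y1 = c y3
    · have hc24 : c y2 = c y4 := by
        apply hsame
        rw [show y2 + y4 = y1 + y3 by linear_combination hsum - add_self' y1 - add_self' y3]
        exact hsame' _ _ hc13
      apply (apn_iff_flat F).mp hF y1 y2 y3 y4 h12 h13 h14 h23 h24 h34 hsum
      rw [← hc13, ← hc24] at hGv
      linear_combination hGv - add_self' (a (c y1)) - add_self' (a (c y2))
    by_cases hc14 : c y1 = c y4
    · have hc23 : c y2 = c y3 := by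
        apply hsame
        rw [show y2 + y3 = y1 + y4 by linear_combination hsum - add_self' y1 - add_self' y4]
        exact hsame' _ _ hc14
      apply (apn_iff_flat F).mp hF y1 y2 y3 y4 h12 h13 h14 h23 h24 h34 hsum
      rw [← hc14, ← hc23] at hGv
      linear_combination hGv - add_self' (a (c y1)) - add_self' (a (c y2))
    have hc23 : c y2 ≠ c y3 := by
      intro h
      apply hc14
      apply hsame
      rw [show y1 + y4 = y2 + y3 by linear_combination hsum - add_self' y2 - add_self' y3]
      exact hsame' _ _ h
    have hc24 : c y2 ≠ c y4 := by
      intro h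
      apply hc13
      apply hsame
      rw [show y1 + y3 = y2 + y4 by linear_combination hsum - add_self' y2 - add_self' y4]
      exact hsame' _ _ h
    have hc34 : c y3 ≠ c y4 := by
      intro h
      apply hc12
      apply hsame
      rw [show y1 + y2 = y3 + y4 by linear_combination hsum - add_self' y3 - add_self' y4]
      exact hsame' _ _ h
    have hA := asum a (c y1) (c y2) (c y3) (c y4) hc12 hc13 hc14 hc23 hc24 hc34
    have cinj : ∀ z w : Fin n → ZMod 2, z ∈ ({y1, y2, y3, y4} : Set _) →
        w ∈ ({y1, y2, y3, y4} : Set _) → c z = c w → z = w := by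
      intro z w hz hw hzw
      simp only [Set.mem_insert_iff, Set.mem_singleton_iff] at hz hw
      rcases hz with rfl | rfl | rfl | rfl <;> rcases hw with rfl | rfl | rfl | rfl <;>
        first
          | rfl
          | (exact absurd hzw (by assumption))
          | (exact absurd hzw.symm (by assumption))
    have hset : ∀ w, w ∈ ({y1, y2, y3, y4} : Set _) →
        (({y1, y2, y3, y4} : Set _) ∩ {x | x + u (c w) ∈ U}) = {w} := by
      intro w hw
      ext z
      simp only [Set.mem_inter_iff, Set.mem_setOf_eq, Set.mem_singleton_iff]
      constructor
      · rintro ⟨hz1, hz2⟩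
        exact cinj z w hz1 hw ((hcu z _ hz2).symm)
      · rintro rfl
        exact ⟨hw, hc z⟩
    have meets : ∀ i : Fin 4,
        (({y1, y2, y3, y4} : Set _) ∩ {x | x + u i ∈ U}).ncard = 1 := by
      intro i
      have huniv : ({c y1, c y2, c y3, c y4} : Finset (Fin 4)) = Finset.univ := by
        apply Finset.eq_univ_of_card
        rw [Finset.card_insert_of_notMem (by simp [hc12, hc13, hc14]),
            Finset.card_insert_of_notMem (by simp [hc23, hc24]),
            Finset.card_insert_of_notMem (by simp [hc34]), Finset.card_singleton]
        simp
      have hi : i ∈ ({c y1, c y2, c y3, c y4} : Finset (Fin 4)) := huniv ▸ Finset.mem_univ i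
      simp only [Finset.mem_insert, Finset.mem_singleton] at hi
      rcases hi with rfl | rfl | rfl | rfl
      · rw [hset y1 (by simp)]; exact Set.ncard_singleton _
      · rw [hset y2 (by simp)]; exact Set.ncard_singleton _
      · rw [hset y3 (by simp)]; exact Set.ncard_singleton _
      · rw [hset y4 (by simp)]; exact Set.ncard_singleton _
    apply hmain y1 y2 y3 y4 h12 h13 h14 h23 h24 h34 hsum meets
    linear_combination hGv - hA - add_self' (a 0 + a 1 + a 2 + a 3)
end

section
/- Let n be even and F(x) = x³ on F_{2^n}. Suppose Tr₂ⁿ denotes the trace from F_{2^n} to F_4 and Tr₁ⁿ the absolute trace. If {x₁,x₂,x₃,x₄} is a 2-flat with Tr₂ⁿ(x₁)=0, Tr₂ⁿ(x₂)=1, Tr₂ⁿ(x₃)=β, Tr₂ⁿ(x₄)=β² (β a primitive cube root of unity in F_4), then for the cosets U_i = {x : Tr₂ⁿ(x) = c_i} with (c₁,c₂,c₃,c₄) = (0,1,β,β²), the function G(x) = F(x) + a_i on U_i with a₁ = a₂ = 0, a₃ + a₄ ∉ {F(x₁)+F(x₂)+F(x₃)+F(x₄) : {x_i} a 2-flat with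 x_i ∈ U_i} is APN provided F(x₁)+F(x₂)+F(x₃)+F(x₄) ≠ a₁+a₂+a₃+a₄ for all such flats. -/
/-- The trace `Tr₂ⁿ(x) = Σ_{i=0}^{n/2-1} x^{4^i}` from `F_{2^n}` onto its
subfield `F_4` (for `n` even). -/
noncomputable def Tr2 (n : ℕ) (x : GaloisField 2 n) : GaloisField 2 n :=
  ∑ i ∈ Finset.range (n / 2), x ^ (4 ^ i)

/-- xor on `Fin 4`. -/
def fxor (i j : Fin 4) : Fin 4 := ⟨(i.val ^^^ j.val) % 4, Nat.mod_lt _ (by norm_num)⟩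

lemma fxor_zero : ∀ i : Fin 4, fxor i 0 = i := by decide

lemma fxor_invol : ∀ i k : Fin 4, fxor (fxor i k) k = i := by decide

lemma fxor_dec : ∀ (i j k : Fin 4), k ≠ 0 → j ≠ i → j ≠ fxor i k →
    i ≠ fxor i k ∧ i ≠ j ∧ i ≠ fxor j k ∧ fxor i k ≠ j ∧ fxor i k ≠ fxor j k ∧
      j ≠ fxor j k := by decide

lemma fxor_last : ∀ (i j k m : Fin 4), k ≠ 0 → j ≠ i → j ≠ fxor i k →
    m ≠ i → m ≠ fxor i k → m ≠ j → m = fxor j k := by decide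

lemma char2 (n : ℕ) : (2 : GaloisField 2 n) = 0 := by
  exact_mod_cast CharP.cast_eq_zero (GaloisField 2 n) 2

lemma tr_add (n : ℕ) (x y : GaloisField 2 n) :
    Tr2 n (x + y) = Tr2 n x + Tr2 n y := by
  unfold Tr2
  rw [← Finset.sum_add_distrib]
  refine Finset.sum_congr rfl fun i _ => ?_
  have h4 : (4 : ℕ) ^ i = 2 ^ (2 * i) := by rw [pow_mul]; norm_num
  rw [h4, add_pow_char_pow]

lemma tr_pow4 (n : ℕ) (hn : 0 < n) (hneven : Even n) (x : GaloisField 2 n) :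
    (Tr2 n x) ^ 4 = Tr2 n x := by
  haveI : Fintype (GaloisField 2 n) := Fintype.ofFinite _
  have hm : 2 * (n / 2) = n := Nat.two_mul_div_two_of_even hneven
  have hxm : x ^ (4 : ℕ) ^ (n / 2) = x := by
    have h4 : (4 : ℕ) ^ (n / 2) = 2 ^ n := by rw [← hm, pow_mul]; norm_num
    rw [h4]
    have hcard : Fintype.card (GaloisField 2 n) = 2 ^ n := by
      rw [← Nat.card_eq_fintype_card, GaloisField.card 2 n (by omega)]
    rw [← hcard]; exact FiniteField.pow_card x
  have h1 : (Tr2 n x) ^ 4 = ∑ i ∈ Finset.range (n / 2), x ^ (4 ^ (i + 1)) := by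
    unfold Tr2
    have h4 : (4 : ℕ) = 2 ^ 2 := by norm_num
    rw [h4, sum_pow_char_pow]
    refine Finset.sum_congr rfl fun i _ => ?_
    rw [← pow_mul, ← h4, ← pow_succ]
  have h2 : ∑ i ∈ Finset.range (n / 2 + 1), x ^ (4 ^ i)
      = ∑ i ∈ Finset.range (n / 2), x ^ (4 ^ (i + 1)) + x ^ (4 ^ 0) :=
    Finset.sum_range_succ' _ _
  have h3 : ∑ i ∈ Finset.range (n / 2 + 1), x ^ (4 ^ i)
      = ∑ i ∈ Finset.range (n / 2), x ^ (4 ^ i) + x ^ (4 ^ (n / 2)) :=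
    Finset.sum_range_succ _ _
  have h5 : (Tr2 n x) ^ 4 + x = Tr2 n x + x := by
    rw [h1]
    have e0 : x ^ (4 : ℕ) ^ 0 = x := by norm_num
    calc (∑ i ∈ Finset.range (n / 2), x ^ 4 ^ (i + 1)) + x
        = ∑ i ∈ Finset.range (n / 2 + 1), x ^ 4 ^ i := by rw [h2, e0]
      _ = Tr2 n x + x := by rw [h3, hxm]; rfl
  exact add_right_cancel h5

section
variable {n : ℕ} {β : GaloisField 2 n}

lemma c_add (hβ : β ^ 2 + β + 1 = 0) :
    ∀ i j : Fin 4, (![0, 1, β, β ^ 2] : Fin 4 → GaloisField 2 n) i + ![0, 1, β, β ^ 2] j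
      = ![0, 1, β, β ^ 2] (fxor i j) := by
  have h2 := char2 n
  intro i j
  fin_cases i <;> fin_cases j <;>
    simp [fxor] <;>
    first
      | ring1
      | linear_combination h2
      | linear_combination β * h2
      | linear_combination β ^ 2 * h2
      | linear_combination hβ - h2
      | linear_combination hβ - β * h2
      | linear_combination hβ - β ^ 2 * h2
      | linear_combination -hβ + h2
      | linear_combination -hβ + β * h2
      | linear_combination -hβ + β ^ 2 * h2

lemma c_ne (hβ : β ^ 2 + β + 1 = 0) :
    ∀ i j : Fin 4, i ≠ j →
      (![0, 1, β, β ^ 2] : Fin 4 → GaloisField 2 n) i ≠ ![0, 1, β, β ^ 2] j := by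
  have h2 := char2 n
  have h10 : (1 : GaloisField 2 n) ≠ 0 := one_ne_zero
  have hβ0 : β ≠ 0 := fun h => h10 (by linear_combination hβ - (β + 1) * h)
  have hβ1 : β ≠ 1 := fun h => h10 (by linear_combination hβ - (β + 2) * h - h2)
  have hb20 : β ^ 2 ≠ 0 := pow_ne_zero _ hβ0
  have hb21 : β ^ 2 ≠ 1 := fun h => hβ0 (by linear_combination hβ - h - h2)
  have hb2b : β ^ 2 ≠ β := fun h => h10 (by linear_combination hβ - h - β * h2)
  intro i j hij
  fin_cases i <;> fin_cases j <;> simp <;>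
    first
      | exact absurd rfl hij
      | exact hβ0 | exact hβ1 | exact hb20 | exact hb21 | exact hb2b
      | exact Ne.symm hβ0 | exact Ne.symm hβ1 | exact Ne.symm hb20
      | exact Ne.symm hb21 | exact Ne.symm hb2b
      | exact (one_ne_zero : (1 : GaloisField 2 n) ≠ 0)
      | exact (zero_ne_one : (0 : GaloisField 2 n) ≠ 1)
      | exact ⟨hβ1, fun h => hβ1 (by linear_combination h - h2)⟩

lemma tr_mem (hn : 0 < n) (hneven : Even n) (hβ : β ^ 2 + β + 1 = 0)
    (x : GaloisField 2 n) :
    ∃ i : Fin 4, Tr2 n x = (![0, 1, β, β ^ 2] : Fin 4 → GaloisField 2 n) i := by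
  have h2 := char2 n
  set t := Tr2 n x with ht
  have ht4 := tr_pow4 n hn hneven x
  have key : t * (t + 1) * (t + β) * (t + β ^ 2) = 0 := by
    have hexp : t * (t + 1) * (t + β) * (t + β ^ 2) = t ^ 4 + t := by
      linear_combination (t ^ 3 + β * t ^ 2 + (β - 1) * t) * hβ
    rw [hexp, ← ht] at *
    rw [ht4]; linear_combination t * h2
  rcases mul_eq_zero.mp key with h | h
  · rcases mul_eq_zero.mp h with h | h
    · rcases mul_eq_zero.mp h with h | h
      · exact ⟨0, by simpa using h⟩
      · exact ⟨1, by simp; linear_combination h - h2⟩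
    · exact ⟨2, by simp; linear_combination h - β * h2⟩
  · exact ⟨3, by simp; linear_combination h - β ^ 2 * h2⟩

end

lemma sum4 {M : Type*} [AddCommMonoid M] (f : Fin 4 → M) {p q r s : Fin 4}
    (hpq : p ≠ q) (hpr : p ≠ r) (hps : p ≠ s) (hqr : q ≠ r) (hqs : q ≠ s)
    (hrs : r ≠ s) :
    f p + f q + f r + f s = f 0 + f 1 + f 2 + f 3 := by
  have huniv : ({p, q, r, s} : Finset (Fin 4)) = Finset.univ := by
    apply Finset.eq_univ_of_card
    rw [Finset.card_insert_of_notMem (by simp [hpq, hpr, hps]),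
        Finset.card_insert_of_notMem (by simp [hqr, hqs]),
        Finset.card_insert_of_notMem (by simp [hrs]), Finset.card_singleton]
    rfl
  calc f p + f q + f r + f s
      = ∑ m ∈ ({p, q, r, s} : Finset (Fin 4)), f m := by
        rw [Finset.sum_insert (by simp [hpq, hpr, hps]),
            Finset.sum_insert (by simp [hqr, hqs]),
            Finset.sum_insert (by simp [hrs]), Finset.sum_singleton]
        abel
    _ = ∑ m, f m := by rw [huniv]
    _ = f 0 + f 1 + f 2 + f 3 := Fin.sum_univ_four f

theorem stmt19 (n : ℕ) (hn : 0 < n) (hneven : Even n)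
    -- `β` is a primitive cube root of unity, generating `F_4 ⊆ F_{2^n}`
    (β : GaloisField 2 n) (hβ : β ^ 2 + β + 1 = 0)
    -- the four trace values `(0, 1, β, β²)` determining the cosets `U_i`
    (c : Fin 4 → GaloisField 2 n)
    (hc : c = ![0, 1, β, β ^ 2])
    (a : Fin 4 → GaloisField 2 n) (ha0 : a 0 = 0) (ha1 : a 1 = 0)
    (G : GaloisField 2 n → GaloisField 2 n)
    (hG : ∀ (i : Fin 4) (x : GaloisField 2 n), Tr2 n x = c i → G x = x ^ 3 + a i)
    -- `F(x₁)+F(x₂)+F(x₃)+F(x₄) ≠ a₁+a₂+a₃+a₄` for every 2-flat with one point in each coset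
    (hflats : ∀ x : Fin 4 → GaloisField 2 n,
      Function.Injective x →
      x 0 + x 1 + x 2 + x 3 = 0 →
      (∀ i : Fin 4, Tr2 n (x i) = c i) →
      (x 0) ^ 3 + (x 1) ^ 3 + (x 2) ^ 3 + (x 3) ^ 3 ≠ a 0 + a 1 + a 2 + a 3) :
    IsAPN G := by
  subst hc
  intro e he b
  have h2 := char2 n
  obtain ⟨k, hk⟩ := tr_mem hn hneven hβ e
  have key : ∀ x ∈ {x | G (x + e) + G x = b}, ∀ y ∈ {x | G (x + e) + G x = b},
      y = x ∨ y = x + e := by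
    intro x hx y hy
    by_contra hcon
    push_neg at hcon
    obtain ⟨hyx, hyxe⟩ := hcon
    obtain ⟨i, hi⟩ := tr_mem hn hneven hβ x
    obtain ⟨j, hj⟩ := tr_mem hn hneven hβ y
    have hi' : Tr2 n (x + e) = ![0, 1, β, β ^ 2] (fxor i k) := by
      rw [tr_add, hi, hk, c_add hβ]
    have hj' : Tr2 n (y + e) = ![0, 1, β, β ^ 2] (fxor j k) := by
      rw [tr_add, hj, hk, c_add hβ]
    have Ex : ((x + e) ^ 3 + a (fxor i k)) + (x ^ 3 + a i) = b := by
      rw [← hG (fxor i k) (x + e) hi', ← hG i x hi]; exact hx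
    have Ey : ((y + e) ^ 3 + a (fxor j k)) + (y ^ 3 + a j) = b := by
      rw [← hG (fxor j k) (y + e) hj', ← hG j y hj]; exact hy
    by_cases hsame : a i + a (fxor i k) = a j + a (fxor j k)
    · have hq : e * (x + y) * (x + y + e) = 0 := by
        linear_combination Ex - Ey - hsame +
          (y ^ 3 - x ^ 3 - x ^ 2 * e + e * x * y + 2 * y ^ 2 * e - x * e ^ 2 +
            2 * y * e ^ 2) * h2
      rcases mul_eq_zero.mp hq with h | h
      · rcases mul_eq_zero.mp h with h | h
        · exact he h
        · exact hyx (by linear_combination y * h2 - h)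
      · exact hyxe (by linear_combination y * h2 - h)
    · have hk0 : k ≠ 0 := by
        intro h
        apply hsame
        subst h
        rw [fxor_zero, fxor_zero]
        have e1 : a i + a i = 0 := by linear_combination (a i) * h2
        have e2 : a j + a j = 0 := by linear_combination (a j) * h2
        rw [e1, e2]
      have hji : j ≠ i := fun h => hsame (by rw [h])
      have hji' : j ≠ fxor i k := by
        intro h
        apply hsame
        rw [h, fxor_invol]
        exact add_comm _ _
      obtain ⟨d1, d2, d3, d4, d5, d6⟩ := fxor_dec i j k hk0 hji hji'
      set w : Fin 4 → GaloisField 2 n :=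
        fun m => if m = i then x else if m = fxor i k then x + e
          else if m = j then y else y + e with hw
      have hwi : w i = x := by simp [hw]
      have hwik : w (fxor i k) = x + e := by simp [hw, Ne.symm d1]
      have hwj : w j = y := by simp [hw, hji, hji']
      have hwjk : w (fxor j k) = y + e := by
        simp [hw, Ne.symm d3, Ne.symm d5, Ne.symm d6]
      have htr : ∀ m, Tr2 n (w m) = ![0, 1, β, β ^ 2] m := by
        intro m
        by_cases e1 : m = i
        · subst e1; rw [hwi]; exact hi
        by_cases e2 : m = fxor i k
        · subst e2; rw [hwik]; exact hi'
        by_cases e3 : m = j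
        · subst e3; rw [hwj]; exact hj
        have e4 : m = fxor j k := fxor_last i j k m hk0 hji hji' e1 e2 e3
        subst e4; rw [hwjk]; exact hj'
      have hwinj : Function.Injective w := by
        intro m1 m2 hmm
        by_contra hne
        exact c_ne hβ m1 m2 hne (by rw [← htr m1, ← htr m2, hmm])
      have hsum : w 0 + w 1 + w 2 + w 3 = 0 := by
        rw [← sum4 w d1 d2 d3 d4 d5 d6, hwi, hwik, hwj, hwjk]
        linear_combination (x + y + e) * h2
      refine hflats w hwinj hsum htr ?_
      have hcube : (w i) ^ 3 + (w (fxor i k)) ^ 3 + (w j) ^ 3 + (w (fxor j k)) ^ 3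
          = (w 0) ^ 3 + (w 1) ^ 3 + (w 2) ^ 3 + (w 3) ^ 3 :=
        sum4 (fun m => (w m) ^ 3) d1 d2 d3 d4 d5 d6
      have hasum : a i + a (fxor i k) + a j + a (fxor j k)
          = a 0 + a 1 + a 2 + a 3 := sum4 a d1 d2 d3 d4 d5 d6
      rw [← hcube, ← hasum, hwi, hwik, hwj, hwjk]
      linear_combination Ex + Ey +
        (b - a i - a (fxor i k) - a j - a (fxor j k)) * h2
  rcases Set.eq_empty_or_nonempty {x | G (x + e) + G x = b} with hS | ⟨x0, hx0⟩
  · simp [hS]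
  · have hsub : {x | G (x + e) + G x = b} ⊆ {x0, x0 + e} := by
      intro y hy
      rcases key x0 hx0 y hy with h | h <;> simp [h]
    calc ({x | G (x + e) + G x = b}).ncard
        ≤ ({x0, x0 + e} : Set (GaloisField 2 n)).ncard :=
          Set.ncard_le_ncard hsub ((Set.finite_singleton _).insert _)
      _ ≤ 2 := le_trans (Set.ncard_insert_le _ _) (by simp)
end
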